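/- arXiv:2101.00312 — 2 statements merged into one kernel-verified Lean document; each statement's English description precedes it below -/
import Mathlib

section
/- Let T be a bounded linear operator on H admitting a reduced A-adjoint T^♯. Then (1/2)·√(‖T^♯T + TT^♯‖_A) ≤ (√2/2)·√(‖Re_A(T)‖_A² + ‖Im_A(T)‖_A²) ≤ ω_A(T). -/
open ContinuousLinearMap

variable {H : Type*} [NormedAddCommGroup H] [InnerProductSpace ℂ H] [CompleteSpace H]

/-- The seminorm on `H` induced by a positive operator `A`: `‖x‖_A = √⟨Ax,x⟩`. -/
noncomputable def vnA (A : H →L[ℂ] H) (x : H) : ℝ :=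
  Real.sqrt (RCLike.re (inner ℂ (A x) x : ℂ))

/-- The `A`-seminorm of an operator: `‖X‖_A = sup {‖Xx‖_A : ‖x‖_A = 1}`. -/
noncomputable def opnA (A : H →L[ℂ] H) (X : H →L[ℂ] H) : ℝ :=
  sSup ((fun x => vnA A (X x)) '' {x : H | vnA A x = 1})

/-- The `A`-numerical radius: `ω_A(X) = sup {|⟨Xx,x⟩_A| : ‖x‖_A = 1}`. -/
noncomputable def wA (A : H →L[ℂ] H) (X : H →L[ℂ] H) : ℝ :=
  sSup ((fun x => ‖(inner ℂ (A (X x)) x : ℂ)‖) '' {x : H | vnA A x = 1})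

/-- `S` is the reduced `A`-adjoint of `T`: `A ∘ S = T* ∘ A` and
`range S ⊆ closure (range A)`. -/
def IsReducedAdjA (A T S : H →L[ℂ] H) : Prop :=
  A ∘L S = (ContinuousLinearMap.adjoint T) ∘L A ∧
    Set.range S ⊆ closure (Set.range (A : H → H))

/-- `X` is `A`-selfadjoint: `A ∘ X = X* ∘ A`. -/
def IsSelfAdjA (A X : H →L[ℂ] H) : Prop :=
  A ∘L X = (ContinuousLinearMap.adjoint X) ∘L A

/-- `Re_A(T) = (T + T♯)/2`. -/
noncomputable def ReA (T Ts : H →L[ℂ] H) : H →L[ℂ] H := (2 : ℂ)⁻¹ • (T + Ts)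

/-- `Im_A(T) = (T - T♯)/(2i)`. -/
noncomputable def ImA (T Ts : H →L[ℂ] H) : H →L[ℂ] H := (2 * Complex.I)⁻¹ • (T - Ts)

section Aux

variable {A : H →L[ℂ] H}

lemma vnA_nonneg (A : H →L[ℂ] H) (x : H) : 0 ≤ vnA A x := Real.sqrt_nonneg _

lemma innerA_conj (hA : A.IsPositive) (x y : H) :
    (starRingEnd ℂ) (inner ℂ (A y) x : ℂ) = inner ℂ (A x) y := by
  rw [inner_conj_symm]
  conv_lhs => rw [← hA.isSelfAdjoint.adjoint_eq]
  exact adjoint_inner_right A x y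

noncomputable def coreA (A : H →L[ℂ] H) (hA : A.IsPositive) : PreInnerProductSpace.Core ℂ H where
  inner x y := inner ℂ (A x) y
  conj_inner_symm x y := innerA_conj hA x y
  re_inner_nonneg x := hA.2 x
  add_left x y z := by simp [inner_add_left]
  smul_left x y r := by simp [inner_smul_left, mul_comm]

lemma vnA_sq (hA : A.IsPositive) (x : H) :
    vnA A x ^ 2 = RCLike.re (inner ℂ (A x) x : ℂ) := Real.sq_sqrt (hA.2 x)

lemma csA (hA : A.IsPositive) (x y : H) :
    ‖(inner ℂ (A x) y : ℂ)‖ ≤ vnA A x * vnA A y := by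
  have h : ‖(inner ℂ (A x) y : ℂ)‖ * ‖(inner ℂ (A y) x : ℂ)‖ ≤
      RCLike.re (inner ℂ (A x) x : ℂ) * RCLike.re (inner ℂ (A y) y : ℂ) :=
    @InnerProductSpace.Core.inner_mul_inner_self_le ℂ H _ _ _ (coreA A hA) x y
  have hxy : ‖(inner ℂ (A y) x : ℂ)‖ = ‖(inner ℂ (A x) y : ℂ)‖ := by
    rw [← innerA_conj hA x y]; exact (RCLike.norm_conj _).symm
  rw [hxy, ← vnA_sq hA, ← vnA_sq hA] at h
  have h2 : ‖(inner ℂ (A x) y : ℂ)‖ ^ 2 ≤ (vnA A x * vnA A y) ^ 2 := by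
    rw [mul_pow]; nlinarith [norm_nonneg (inner ℂ (A x) y : ℂ)]
  calc ‖(inner ℂ (A x) y : ℂ)‖ = Real.sqrt (‖(inner ℂ (A x) y : ℂ)‖ ^ 2) :=
        (Real.sqrt_sq (norm_nonneg _)).symm
    _ ≤ Real.sqrt ((vnA A x * vnA A y) ^ 2) := Real.sqrt_le_sqrt h2
    _ = vnA A x * vnA A y := Real.sqrt_sq (mul_nonneg (vnA_nonneg A x) (vnA_nonneg A y))

lemma vnA_smul (c : ℂ) (x : H) : vnA A (c • x) = ‖c‖ * vnA A x := by
  unfold vnA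
  have h1 : (inner ℂ (A (c • x)) (c • x) : ℂ) = (‖c‖ : ℂ) ^ 2 * inner ℂ (A x) x := by
    rw [map_smul, inner_smul_left, inner_smul_right, ← mul_assoc, RCLike.conj_mul]
    norm_cast
  have h2 : RCLike.re ((‖c‖ : ℂ) ^ 2 * (inner ℂ (A x) x : ℂ))
      = ‖c‖ ^ 2 * RCLike.re (inner ℂ (A x) x : ℂ) := by
    simp [← Complex.ofReal_pow]
  rw [h1, h2, Real.sqrt_mul (sq_nonneg _), Real.sqrt_sq (norm_nonneg _)]

lemma vnA_add_le (hA : A.IsPositive) (x y : H) : vnA A (x + y) ≤ vnA A x + vnA A y := by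
  have hre : RCLike.re (inner ℂ (A y) x : ℂ) = RCLike.re (inner ℂ (A x) y : ℂ) := by
    rw [← innerA_conj hA x y, RCLike.conj_re]
  have hexp : RCLike.re (inner ℂ (A (x + y)) (x + y) : ℂ) =
      RCLike.re (inner ℂ (A x) x : ℂ) + 2 * RCLike.re (inner ℂ (A x) y : ℂ)
        + RCLike.re (inner ℂ (A y) y : ℂ) := by
    rw [map_add, inner_add_left, inner_add_right, inner_add_right]
    simp only [map_add]
    rw [hre]; ring
  have h1 : RCLike.re (inner ℂ (A x) y : ℂ) ≤ vnA A x * vnA A y :=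
    (RCLike.re_le_norm _).trans (csA hA x y)
  have h2 : vnA A (x + y) ^ 2 ≤ (vnA A x + vnA A y) ^ 2 := by
    rw [vnA_sq hA, hexp, ← vnA_sq hA x, ← vnA_sq hA y]; nlinarith
  calc vnA A (x + y) = Real.sqrt (vnA A (x + y) ^ 2) := (Real.sqrt_sq (vnA_nonneg A _)).symm
    _ ≤ Real.sqrt ((vnA A x + vnA A y) ^ 2) := Real.sqrt_le_sqrt h2
    _ = vnA A x + vnA A y :=
        Real.sqrt_sq (add_nonneg (vnA_nonneg A x) (vnA_nonneg A y))

lemma vnA_le_norm (hA : A.IsPositive) (x : H) :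
    vnA A x ≤ Real.sqrt ‖A‖ * ‖x‖ := by
  have h : RCLike.re (inner ℂ (A x) x : ℂ) ≤ ‖A‖ * ‖x‖ ^ 2 := by
    calc RCLike.re (inner ℂ (A x) x : ℂ) ≤ ‖(inner ℂ (A x) x : ℂ)‖ := RCLike.re_le_norm _
      _ ≤ ‖A x‖ * ‖x‖ := norm_inner_le_norm _ _
      _ ≤ ‖A‖ * ‖x‖ * ‖x‖ := by
          have := A.le_opNorm x
          nlinarith [norm_nonneg x]
      _ = ‖A‖ * ‖x‖ ^ 2 := by ring
  calc vnA A x ≤ Real.sqrt (‖A‖ * ‖x‖ ^ 2) := Real.sqrt_le_sqrt h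
    _ = Real.sqrt ‖A‖ * ‖x‖ := by
        rw [Real.sqrt_mul (norm_nonneg A), Real.sqrt_sq (norm_nonneg x)]

lemma sphereA_nonempty (hA : A.IsPositive) (hA0 : A ≠ 0) : ∃ x : H, vnA A x = 1 := by
  by_contra hcon
  push_neg at hcon
  apply hA0
  have hz : ∀ x : H, vnA A x = 0 := by
    intro x
    by_contra hx
    have hpos : 0 < vnA A x := (vnA_nonneg A x).lt_of_ne (Ne.symm hx)
    apply hcon (((vnA A x)⁻¹ : ℝ) • x)
    rw [← Complex.coe_smul, vnA_smul, Complex.norm_real, Real.norm_eq_abs,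
      abs_of_pos (inv_pos.mpr hpos), inv_mul_cancel₀ (ne_of_gt hpos)]
  ext x
  have h := csA hA x (A x)
  rw [hz, zero_mul] at h
  have : (inner ℂ (A x) (A x) : ℂ) = 0 := norm_le_zero_iff.mp h
  simpa using inner_self_eq_zero.mp this

lemma innerA_selfadj {R : H →L[ℂ] H} (hR : IsSelfAdjA A R) (x y : H) :
    (inner ℂ (A (R x)) y : ℂ) = inner ℂ (A x) (R y) := by
  have h := DFunLike.congr_fun hR x
  simp only [coe_comp', Function.comp_apply] at h
  rw [h, adjoint_inner_left]

lemma selfadjA_comp {R : H →L[ℂ] H} (hR : IsSelfAdjA A R) (hA : A.IsPositive) :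
    IsSelfAdjA A (R ∘L R) := by
  unfold IsSelfAdjA
  ext x
  simp only [coe_comp', Function.comp_apply]
  have h := fun z => DFunLike.congr_fun hR z
  simp only [coe_comp', Function.comp_apply] at h
  rw [adjoint_comp]
  simp only [coe_comp', Function.comp_apply]
  rw [h, h]

lemma keyA (hA : A.IsPositive) {R : H →L[ℂ] H} (hR : IsSelfAdjA A R) (x : H) :
    vnA A (R x) ^ 2 ≤ vnA A x * vnA A (R (R x)) := by
  rw [vnA_sq hA]
  rw [innerA_selfadj hR x (R x)]
  exact (RCLike.re_le_norm _).trans (csA hA x (R (R x)))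

noncomputable def iterSq (R : H →L[ℂ] H) : ℕ → H →L[ℂ] H
  | 0 => R
  | n + 1 => iterSq R n ∘L iterSq R n

lemma iterSq_selfadj (hA : A.IsPositive) {R : H →L[ℂ] H} (hR : IsSelfAdjA A R) (n : ℕ) :
    IsSelfAdjA A (iterSq R n) := by
  induction n with
  | zero => exact hR
  | succ n ih => exact selfadjA_comp ih hA

lemma iterSq_norm {R : H →L[ℂ] H} (n : ℕ) : ‖iterSq R n‖ ≤ ‖R‖ ^ (2 ^ n) := by
  induction n with
  | zero => simp [iterSq]
  | succ n ih =>
    calc ‖iterSq R (n+1)‖ ≤ ‖iterSq R n‖ * ‖iterSq R n‖ := opNorm_comp_le _ _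
      _ ≤ ‖R‖ ^ (2 ^ n) * ‖R‖ ^ (2 ^ n) := by
          exact mul_le_mul ih ih (norm_nonneg _) (pow_nonneg (norm_nonneg _) _)
      _ = ‖R‖ ^ (2 ^ (n+1)) := by rw [← pow_add]; ring_nf

lemma mainA (hA : A.IsPositive) {R : H →L[ℂ] H} (hR : IsSelfAdjA A R) (x : H) (n : ℕ) :
    vnA A (R x) ^ (2 ^ n) ≤ vnA A x ^ (2 ^ n - 1) * vnA A (iterSq R n x) := by
  induction n with
  | zero => simp [iterSq]
  | succ n ih =>
    have h1 : vnA A (R x) ^ (2 ^ (n+1)) = (vnA A (R x) ^ (2 ^ n)) ^ 2 := by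
      rw [← pow_mul]; ring_nf
    have h2 : (vnA A (R x) ^ (2 ^ n)) ^ 2 ≤ (vnA A x ^ (2 ^ n - 1) * vnA A (iterSq R n x)) ^ 2 :=
      pow_le_pow_left₀ (pow_nonneg (vnA_nonneg A _) _) ih 2
    have h3 : vnA A (iterSq R n x) ^ 2 ≤ vnA A x * vnA A (iterSq R (n+1) x) := by
      have := keyA hA (iterSq_selfadj hA hR n) x
      simpa [iterSq] using this
    have h4 : (vnA A x ^ (2 ^ n - 1) * vnA A (iterSq R n x)) ^ 2
        = (vnA A x ^ (2 ^ n - 1)) ^ 2 * vnA A (iterSq R n x) ^ 2 := by ring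
    have h5 : (vnA A x ^ (2 ^ n - 1)) ^ 2 * vnA A (iterSq R n x) ^ 2
        ≤ (vnA A x ^ (2 ^ n - 1)) ^ 2 * (vnA A x * vnA A (iterSq R (n+1) x)) :=
      mul_le_mul_of_nonneg_left h3 (sq_nonneg _)
    have h6 : (vnA A x ^ (2 ^ n - 1)) ^ 2 * (vnA A x * vnA A (iterSq R (n+1) x))
        = vnA A x ^ (2 ^ (n+1) - 1) * vnA A (iterSq R (n+1) x) := by
      rw [← pow_mul, ← mul_assoc, ← pow_succ]
      congr 2
      have h7 : 1 ≤ 2 ^ n := Nat.one_le_two_pow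
      have he : 2 ^ (n+1) = 2 * 2 ^ n := by ring
      omega
    linarith

lemma vnA_zero (A : H →L[ℂ] H) : vnA A 0 = 0 := by simp [vnA]

lemma selfadjA_vnA_le (hA : A.IsPositive) (hA0 : A ≠ 0) {R : H →L[ℂ] H}
    (hR : IsSelfAdjA A R) (x : H) : vnA A (R x) ≤ ‖R‖ * vnA A x := by
  -- unit sphere case first
  have claim : ∀ y : H, vnA A y = 1 → vnA A (R y) ≤ ‖R‖ := by
    intro y hy1
    by_contra hlt
    push_neg at hlt
    have hRy : 0 < vnA A (R y) := lt_of_le_of_lt (norm_nonneg R) hlt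
    have hRne : ‖R‖ ≠ 0 := by
      intro h
      have : R = 0 := norm_eq_zero.mp h
      rw [this] at hlt
      simp only [zero_apply, vnA_zero] at hlt
      exact absurd hlt (by simp [h])
    have hRpos : 0 < ‖R‖ := (norm_nonneg R).lt_of_ne (Ne.symm hRne)
    have hy0 : y ≠ 0 := by
      intro h; rw [h, vnA_zero] at hy1; norm_num at hy1
    have hApos : 0 < ‖A‖ := norm_pos_iff.mpr hA0
    set c : ℝ := Real.sqrt ‖A‖ * ‖y‖ with hc
    have hcpos : 0 < c := mul_pos (Real.sqrt_pos.mpr hApos) (norm_pos_iff.mpr hy0)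
    set t : ℝ := vnA A (R y) / ‖R‖ with ht
    have ht1 : 1 < t := (one_lt_div hRpos).mpr hlt
    obtain ⟨N, hN⟩ := pow_unbounded_of_one_lt c ht1
    have hmain := mainA hA hR y N
    rw [hy1, one_pow, one_mul] at hmain
    have hbound : vnA A (iterSq R N y) ≤ c * ‖R‖ ^ (2 ^ N) := by
      calc vnA A (iterSq R N y) ≤ Real.sqrt ‖A‖ * ‖iterSq R N y‖ := vnA_le_norm hA _
        _ ≤ Real.sqrt ‖A‖ * (‖iterSq R N‖ * ‖y‖) := by
            exact mul_le_mul_of_nonneg_left (le_opNorm _ _) (Real.sqrt_nonneg _)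
        _ ≤ Real.sqrt ‖A‖ * (‖R‖ ^ (2 ^ N) * ‖y‖) := by
            refine mul_le_mul_of_nonneg_left ?_ (Real.sqrt_nonneg _)
            exact mul_le_mul_of_nonneg_right (iterSq_norm N) (norm_nonneg _)
        _ = c * ‖R‖ ^ (2 ^ N) := by rw [hc]; ring
    have ht2N : t ^ (2 ^ N) ≤ c := by
      rw [ht, div_pow, div_le_iff₀ (pow_pos hRpos _)]
      calc vnA A (R y) ^ (2 ^ N) ≤ vnA A (iterSq R N y) := hmain
        _ ≤ c * ‖R‖ ^ (2 ^ N) := hbound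
    have htNle : t ^ N ≤ t ^ (2 ^ N) := pow_le_pow_right₀ ht1.le Nat.lt_two_pow_self.le
    linarith
  -- general case
  rcases eq_or_lt_of_le (vnA_nonneg A x) with h0 | h0
  · have h2 := keyA hA hR x
    rw [← h0, zero_mul] at h2
    have : vnA A (R x) = 0 := by
      have := sq_nonneg (vnA A (R x))
      nlinarith [vnA_nonneg A (R x)]
    rw [this, ← h0, mul_zero]
  · set m := vnA A x with hm
    have hy1 : vnA A (((m⁻¹ : ℝ) : ℂ) • x) = 1 := by
      rw [vnA_smul, Complex.norm_real, Real.norm_eq_abs, abs_of_pos (inv_pos.mpr h0),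
        inv_mul_cancel₀ (ne_of_gt h0)]
    have h := claim _ hy1
    rw [map_smul, vnA_smul, Complex.norm_real, Real.norm_eq_abs,
      abs_of_pos (inv_pos.mpr h0)] at h
    calc vnA A (R x) = m * (m⁻¹ * vnA A (R x)) := by field_simp
      _ ≤ m * ‖R‖ := mul_le_mul_of_nonneg_left h h0.le
      _ = ‖R‖ * m := mul_comm _ _

section Sup

variable (hA : A.IsPositive) (hA0 : A ≠ 0) {X : H →L[ℂ] H} {c : ℝ}
  (hX : ∀ x, vnA A (X x) ≤ c * vnA A x)

include hA hA0 hX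

lemma opnA_bddAbove : BddAbove ((fun x => vnA A (X x)) '' {x : H | vnA A x = 1}) := by
  refine ⟨c, ?_⟩
  rintro _ ⟨x, hx, rfl⟩
  have := hX x
  rw [Set.mem_setOf_eq.mp hx, mul_one] at this
  exact this

lemma le_opnA {x : H} (hx : vnA A x = 1) : vnA A (X x) ≤ opnA A X :=
  le_csSup (opnA_bddAbove hA hA0 hX) ⟨x, hx, rfl⟩

lemma opnA_nonneg : 0 ≤ opnA A X := by
  obtain ⟨x, hx⟩ := sphereA_nonempty hA hA0
  exact (vnA_nonneg A (X x)).trans (le_opnA hA hA0 hX hx)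

lemma opnA_mul_vnA (x : H) : vnA A (X x) ≤ opnA A X * vnA A x := by
  rcases eq_or_lt_of_le (vnA_nonneg A x) with h0 | h0
  · have h1 := hX x
    rw [← h0, mul_zero] at h1
    have h2 := le_antisymm h1 (vnA_nonneg A (X x))
    rw [h2, ← h0, mul_zero]
  · set m := vnA A x with hm
    have hy1 : vnA A (((m⁻¹ : ℝ) : ℂ) • x) = 1 := by
      rw [vnA_smul, Complex.norm_real, Real.norm_eq_abs, abs_of_pos (inv_pos.mpr h0),
        inv_mul_cancel₀ (ne_of_gt h0)]
    have h := le_opnA hA hA0 hX hy1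
    rw [map_smul, vnA_smul, Complex.norm_real, Real.norm_eq_abs,
      abs_of_pos (inv_pos.mpr h0)] at h
    calc vnA A (X x) = m * (m⁻¹ * vnA A (X x)) := by field_simp
      _ ≤ m * opnA A X := mul_le_mul_of_nonneg_left h h0.le
      _ = opnA A X * m := mul_comm _ _

omit hX in
lemma opnA_le (h : ∀ x, vnA A x = 1 → vnA A (X x) ≤ c) : opnA A X ≤ c := by
  obtain ⟨x0, hx0⟩ := sphereA_nonempty hA hA0
  refine csSup_le ⟨_, ⟨x0, hx0, rfl⟩⟩ ?_
  rintro _ ⟨x, hx, rfl⟩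
  exact h x hx

lemma wA_bddAbove : BddAbove ((fun x => ‖(inner ℂ (A (X x)) x : ℂ)‖) '' {x : H | vnA A x = 1}) := by
  refine ⟨c, ?_⟩
  rintro _ ⟨x, hx, rfl⟩
  have hx1 : vnA A x = 1 := hx
  calc ‖(inner ℂ (A (X x)) x : ℂ)‖ ≤ vnA A (X x) * vnA A x := csA hA (X x) x
    _ = vnA A (X x) := by rw [hx1, mul_one]
    _ ≤ c := by have := hX x; rwa [hx1, mul_one] at this

lemma le_wA {x : H} (hx : vnA A x = 1) : ‖(inner ℂ (A (X x)) x : ℂ)‖ ≤ wA A X :=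
  le_csSup (wA_bddAbove hA hA0 hX) ⟨x, hx, rfl⟩

lemma wA_nonneg : 0 ≤ wA A X := by
  obtain ⟨x, hx⟩ := sphereA_nonempty hA hA0
  exact (norm_nonneg _).trans (le_wA hA hA0 hX hx)

omit hX in
lemma wA_le (h : ∀ x, vnA A x = 1 → ‖(inner ℂ (A (X x)) x : ℂ)‖ ≤ c) : wA A X ≤ c := by
  obtain ⟨x0, hx0⟩ := sphereA_nonempty hA hA0
  refine csSup_le ⟨_, ⟨x0, hx0, rfl⟩⟩ ?_
  rintro _ ⟨x, hx, rfl⟩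
  exact h x hx

lemma wA_bound (x : H) : ‖(inner ℂ (A (X x)) x : ℂ)‖ ≤ wA A X * vnA A x ^ 2 := by
  rcases eq_or_lt_of_le (vnA_nonneg A x) with h0 | h0
  · have h1 : ‖(inner ℂ (A (X x)) x : ℂ)‖ ≤ 0 := by
      have := csA hA (X x) x
      rw [← h0, mul_zero] at this
      exact this
    rw [← h0]
    calc ‖(inner ℂ (A (X x)) x : ℂ)‖ ≤ 0 := h1
      _ ≤ wA A X * 0 ^ 2 := by simp
  · set m := vnA A x with hm
    have hy1 : vnA A (((m⁻¹ : ℝ) : ℂ) • x) = 1 := by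
      rw [vnA_smul, Complex.norm_real, Real.norm_eq_abs, abs_of_pos (inv_pos.mpr h0),
        inv_mul_cancel₀ (ne_of_gt h0)]
    have h := le_wA hA hA0 hX hy1
    have hval : (inner ℂ (A (X (((m⁻¹ : ℝ) : ℂ) • x))) (((m⁻¹ : ℝ) : ℂ) • x) : ℂ)
        = (starRingEnd ℂ) ((m⁻¹ : ℝ) : ℂ) * (((m⁻¹ : ℝ) : ℂ) * inner ℂ (A (X x)) x) := by
      rw [map_smul, map_smul, inner_smul_left, inner_smul_right]
    rw [hval] at h
    rw [norm_mul, norm_mul, RCLike.norm_conj, Complex.norm_real, Real.norm_eq_abs,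
      abs_of_pos (inv_pos.mpr h0)] at h
    have h2 : m⁻¹ * (m⁻¹ * ‖(inner ℂ (A (X x)) x : ℂ)‖) ≤ wA A X := h
    calc ‖(inner ℂ (A (X x)) x : ℂ)‖
        = m ^ 2 * (m⁻¹ * (m⁻¹ * ‖(inner ℂ (A (X x)) x : ℂ)‖)) := by field_simp
      _ ≤ m ^ 2 * wA A X := mul_le_mul_of_nonneg_left h2 (sq_nonneg _)
      _ = wA A X * m ^ 2 := mul_comm _ _

end Sup

lemma parallelogramA (hA : A.IsPositive) (x y : H) :
    vnA A (x + y) ^ 2 + vnA A (x - y) ^ 2 = 2 * (vnA A x ^ 2 + vnA A y ^ 2) := by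
  rw [vnA_sq hA, vnA_sq hA, vnA_sq hA, vnA_sq hA]
  have e1 : (inner ℂ (A (x + y)) (x + y) : ℂ)
      = inner ℂ (A x) x + inner ℂ (A x) y + inner ℂ (A y) x + inner ℂ (A y) y := by
    rw [map_add, inner_add_left, inner_add_right, inner_add_right]; ring
  have e2 : (inner ℂ (A (x - y)) (x - y) : ℂ)
      = inner ℂ (A x) x - inner ℂ (A x) y - inner ℂ (A y) x + inner ℂ (A y) y := by
    rw [map_sub, inner_sub_left, inner_sub_right, inner_sub_right]; ring
  rw [e1, e2]
  simp only [map_add, map_sub]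
  ring

lemma opnA_le_wA (hA : A.IsPositive) (hA0 : A ≠ 0) {R : H →L[ℂ] H} (hR : IsSelfAdjA A R) :
    opnA A R ≤ wA A R := by
  have hRb : ∀ x, vnA A (R x) ≤ ‖R‖ * vnA A x := selfadjA_vnA_le hA hA0 hR
  have hconj : ∀ u v : H, (starRingEnd ℂ) (inner ℂ (A (R v)) u : ℂ) = inner ℂ (A (R u)) v := by
    intro u v
    rw [inner_conj_symm]
    conv_lhs => rw [← hA.isSelfAdjoint.adjoint_eq]
    rw [adjoint_inner_right, ← innerA_selfadj hR u v]
  have hherm : ∀ u v : H, RCLike.re (inner ℂ (A (R u)) v : ℂ)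
      = RCLike.re (inner ℂ (A (R v)) u : ℂ) := by
    intro u v
    rw [← hconj u v, RCLike.conj_re]
  refine opnA_le hA hA0 (X := R) (c := wA A R) ?_
  intro x hx
  by_cases h0 : vnA A (R x) = 0
  · rw [h0]; exact wA_nonneg hA hA0 hRb
  have hpos : 0 < vnA A (R x) := (vnA_nonneg A _).lt_of_ne (Ne.symm h0)
  set r : ℝ := vnA A (R x) with hr
  set y : H := ((r⁻¹ : ℝ) : ℂ) • R x with hy
  have hy1 : vnA A y = 1 := by
    rw [hy, vnA_smul, Complex.norm_real, Real.norm_eq_abs, abs_of_pos (inv_pos.mpr hpos),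
      ← hr, inv_mul_cancel₀ (ne_of_gt hpos)]
  have hxy : RCLike.re (inner ℂ (A (R x)) y : ℂ) = r := by
    rw [hy, inner_smul_right]
    have h1 : RCLike.re ((((r⁻¹ : ℝ)) : ℂ) * (inner ℂ (A (R x)) (R x) : ℂ))
        = r⁻¹ * RCLike.re (inner ℂ (A (R x)) (R x) : ℂ) := by simp
    rw [h1, ← vnA_sq hA, ← hr]
    field_simp
  have e1 : (inner ℂ (A (R (x + y))) (x + y) : ℂ)
      = inner ℂ (A (R x)) x + inner ℂ (A (R x)) y + inner ℂ (A (R y)) x + inner ℂ (A (R y)) y := by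
    rw [map_add R, map_add A, inner_add_left, inner_add_right, inner_add_right]; ring
  have e2 : (inner ℂ (A (R (x - y))) (x - y) : ℂ)
      = inner ℂ (A (R x)) x - inner ℂ (A (R x)) y - inner ℂ (A (R y)) x + inner ℂ (A (R y)) y := by
    rw [map_sub R, map_sub A, inner_sub_left, inner_sub_right, inner_sub_right]; ring
  have re1 : RCLike.re (inner ℂ (A (R (x + y))) (x + y) : ℂ)
      = RCLike.re (inner ℂ (A (R x)) x : ℂ) + 2 * r + RCLike.re (inner ℂ (A (R y)) y : ℂ) := by
    rw [e1]
    simp only [map_add]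
    rw [hherm y x, hxy]
    ring
  have re2 : RCLike.re (inner ℂ (A (R (x - y))) (x - y) : ℂ)
      = RCLike.re (inner ℂ (A (R x)) x : ℂ) - 2 * r + RCLike.re (inner ℂ (A (R y)) y : ℂ) := by
    rw [e2]
    simp only [map_sub, map_add]
    rw [hherm y x, hxy]
    ring
  have hb1 : ‖(inner ℂ (A (R (x + y))) (x + y) : ℂ)‖ ≤ wA A R * vnA A (x + y) ^ 2 :=
    wA_bound hA hA0 hRb (x + y)
  have hb2 : ‖(inner ℂ (A (R (x - y))) (x - y) : ℂ)‖ ≤ wA A R * vnA A (x - y) ^ 2 :=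
    wA_bound hA hA0 hRb (x - y)
  have hpar : vnA A (x + y) ^ 2 + vnA A (x - y) ^ 2 = 4 := by
    rw [parallelogramA hA, hx, hy1]; norm_num
  have habs1 := RCLike.abs_re_le_norm (inner ℂ (A (R (x + y))) (x + y) : ℂ)
  have habs2 := RCLike.abs_re_le_norm (inner ℂ (A (R (x - y))) (x - y) : ℂ)
  have hwnn : 0 ≤ wA A R := wA_nonneg hA hA0 hRb
  have d1 : RCLike.re (inner ℂ (A (R (x + y))) (x + y) : ℂ)
      ≤ wA A R * vnA A (x + y) ^ 2 :=
    (le_abs_self _).trans (habs1.trans hb1)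
  have d2 : -(wA A R * vnA A (x - y) ^ 2)
      ≤ RCLike.re (inner ℂ (A (R (x - y))) (x - y) : ℂ) := by
    have h := habs2.trans hb2
    linarith [neg_abs_le (RCLike.re (inner ℂ (A (R (x - y))) (x - y) : ℂ))]
  have h4 : 4 * r ≤ wA A R * vnA A (x + y) ^ 2 + wA A R * vnA A (x - y) ^ 2 := by
    linarith
  rw [← mul_add, hpar] at h4
  linarith

end Aux

section Main

variable {A T Ts : H →L[ℂ] H}

lemma adjTs_comp (hA : A.IsPositive) (hTs : IsReducedAdjA A T Ts) :
    (ContinuousLinearMap.adjoint Ts) ∘L A = A ∘L T := by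
  have h := congrArg ContinuousLinearMap.adjoint hTs.1
  rw [adjoint_comp, adjoint_comp, adjoint_adjoint, hA.isSelfAdjoint.adjoint_eq] at h
  exact h

lemma ReA_selfadj (hA : A.IsPositive) (hTs : IsReducedAdjA A T Ts) :
    IsSelfAdjA A (ReA T Ts) := by
  unfold IsSelfAdjA ReA
  have hadj : ContinuousLinearMap.adjoint ((2 : ℂ)⁻¹ • (T + Ts))
      = (2 : ℂ)⁻¹ • (ContinuousLinearMap.adjoint T + ContinuousLinearMap.adjoint Ts) := by
    rw [← star_eq_adjoint, star_smul, star_add, star_eq_adjoint, star_eq_adjoint]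
    congr 1
    simp
  rw [hadj, comp_smul, smul_comp, comp_add, add_comp, hTs.1, adjTs_comp hA hTs, add_comm]

lemma ImA_selfadj (hA : A.IsPositive) (hTs : IsReducedAdjA A T Ts) :
    IsSelfAdjA A (ImA T Ts) := by
  unfold IsSelfAdjA ImA
  have hadj : ContinuousLinearMap.adjoint ((2 * Complex.I)⁻¹ • (T - Ts))
      = (-(2 * Complex.I)⁻¹) • (ContinuousLinearMap.adjoint T - ContinuousLinearMap.adjoint Ts) := by
    rw [← star_eq_adjoint, star_smul, star_sub, star_eq_adjoint, star_eq_adjoint]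
    congr 1
    simp [Complex.ext_iff]
  rw [hadj, comp_smul, smul_comp, comp_sub, sub_comp, hTs.1, adjTs_comp hA hTs,
    neg_smul, ← smul_neg, neg_sub]


lemma T_decomp (x : H) : T x = ReA T Ts x + Complex.I • ImA T Ts x := by
  simp only [ReA, ImA, coe_smul', Pi.smul_apply, add_apply, sub_apply, smul_smul]
  have hc : Complex.I * (2 * Complex.I)⁻¹ = (2 : ℂ)⁻¹ := by
    field_simp
  rw [hc]
  module

lemma T_vnA_bound (hA : A.IsPositive) (hA0 : A ≠ 0) (hTs : IsReducedAdjA A T Ts) (x : H) :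
    vnA A (T x) ≤ (‖ReA T Ts‖ + ‖ImA T Ts‖) * vnA A x := by
  rw [T_decomp (Ts := Ts) x]
  calc vnA A (ReA T Ts x + Complex.I • ImA T Ts x)
      ≤ vnA A (ReA T Ts x) + vnA A (Complex.I • ImA T Ts x) := vnA_add_le hA _ _
    _ = vnA A (ReA T Ts x) + vnA A (ImA T Ts x) := by
        rw [vnA_smul, Complex.norm_I, one_mul]
    _ ≤ ‖ReA T Ts‖ * vnA A x + ‖ImA T Ts‖ * vnA A x := by
        exact add_le_add (selfadjA_vnA_le hA hA0 (ReA_selfadj hA hTs) x)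
          (selfadjA_vnA_le hA hA0 (ImA_selfadj hA hTs) x)
    _ = (‖ReA T Ts‖ + ‖ImA T Ts‖) * vnA A x := by ring

lemma inner_Ts_conj (hA : A.IsPositive) (hTs : IsReducedAdjA A T Ts) (x : H) :
    (inner ℂ (A (Ts x)) x : ℂ) = (starRingEnd ℂ) (inner ℂ (A (T x)) x) := by
  have h := DFunLike.congr_fun hTs.1 x
  simp only [coe_comp', Function.comp_apply] at h
  rw [h, adjoint_inner_left]
  exact (innerA_conj hA x (T x)).symm

lemma wA_ReA_le (hA : A.IsPositive) (hA0 : A ≠ 0) (hTs : IsReducedAdjA A T Ts) :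
    wA A (ReA T Ts) ≤ wA A T := by
  refine wA_le hA hA0 ?_
  intro x hx
  have hval : (inner ℂ (A (ReA T Ts x)) x : ℂ)
      = (2 : ℂ)⁻¹ * (inner ℂ (A (T x)) x + (starRingEnd ℂ) (inner ℂ (A (T x)) x)) := by
    have h1 : ReA T Ts x = (2 : ℂ)⁻¹ • (T x + Ts x) := by simp [ReA]
    rw [h1, map_smul, inner_smul_left, map_add, inner_add_left, inner_Ts_conj hA hTs]
    congr 1
    simp [Complex.conj_ofNat]
  rw [hval, norm_mul]
  have h2 : ‖((2 : ℂ)⁻¹)‖ = 2⁻¹ := by simp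
  have h3 : ‖(inner ℂ (A (T x)) x : ℂ) + (starRingEnd ℂ) (inner ℂ (A (T x)) x)‖
      ≤ 2 * ‖(inner ℂ (A (T x)) x : ℂ)‖ := by
    calc ‖(inner ℂ (A (T x)) x : ℂ) + (starRingEnd ℂ) (inner ℂ (A (T x)) x)‖
        ≤ ‖(inner ℂ (A (T x)) x : ℂ)‖ + ‖(starRingEnd ℂ) (inner ℂ (A (T x)) x)‖ := norm_add_le _ _
      _ = 2 * ‖(inner ℂ (A (T x)) x : ℂ)‖ := by rw [RCLike.norm_conj]; ring
  have h4 : ‖(inner ℂ (A (T x)) x : ℂ)‖ ≤ wA A T :=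
    le_wA hA hA0 (T_vnA_bound hA hA0 hTs) hx
  rw [h2]
  nlinarith [norm_nonneg (inner ℂ (A (T x)) x : ℂ)]

lemma wA_ImA_le (hA : A.IsPositive) (hA0 : A ≠ 0) (hTs : IsReducedAdjA A T Ts) :
    wA A (ImA T Ts) ≤ wA A T := by
  refine wA_le hA hA0 ?_
  intro x hx
  have hval : (inner ℂ (A (ImA T Ts x)) x : ℂ)
      = (starRingEnd ℂ) ((2 * Complex.I)⁻¹)
        * (inner ℂ (A (T x)) x - (starRingEnd ℂ) (inner ℂ (A (T x)) x)) := by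
    have h1 : ImA T Ts x = (2 * Complex.I)⁻¹ • (T x - Ts x) := by simp [ImA]
    rw [h1, map_smul, inner_smul_left, map_sub, inner_sub_left, inner_Ts_conj hA hTs]
  rw [hval, norm_mul]
  have h2 : ‖(starRingEnd ℂ) ((2 * Complex.I)⁻¹)‖ = 2⁻¹ := by
    rw [RCLike.norm_conj]
    simp
  have h3 : ‖(inner ℂ (A (T x)) x : ℂ) - (starRingEnd ℂ) (inner ℂ (A (T x)) x)‖
      ≤ 2 * ‖(inner ℂ (A (T x)) x : ℂ)‖ := by
    calc ‖(inner ℂ (A (T x)) x : ℂ) - (starRingEnd ℂ) (inner ℂ (A (T x)) x)‖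
        ≤ ‖(inner ℂ (A (T x)) x : ℂ)‖ + ‖(starRingEnd ℂ) (inner ℂ (A (T x)) x)‖ := norm_sub_le _ _
      _ = 2 * ‖(inner ℂ (A (T x)) x : ℂ)‖ := by rw [RCLike.norm_conj]; ring
  have h4 : ‖(inner ℂ (A (T x)) x : ℂ)‖ ≤ wA A T :=
    le_wA hA hA0 (T_vnA_bound hA hA0 hTs) hx
  rw [h2]
  nlinarith [norm_nonneg (inner ℂ (A (T x)) x : ℂ)]

lemma TT_decomp (x : H) :
    Ts (T x) + T (Ts x) = (2 : ℂ) • (ReA T Ts (ReA T Ts x) + ImA T Ts (ImA T Ts x)) := by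
  simp only [ReA, ImA, coe_smul', Pi.smul_apply, map_smul, map_add, map_sub, smul_add,
    smul_sub, smul_smul, add_apply, sub_apply]
  have hc2 : (2 * Complex.I)⁻¹ * (2 * Complex.I)⁻¹ = -(4 : ℂ)⁻¹ := by
    rw [← mul_inv]
    have : (2 * Complex.I) * (2 * Complex.I) = -4 := by
      have := Complex.I_mul_I
      ring_nf
      rw [Complex.I_sq]
      ring
    rw [this]
    norm_num
  rw [hc2]
  module

theorem stmt0 (A T Ts : H →L[ℂ] H) (hA : A.IsPositive) (hA0 : A ≠ 0)
    (hTs : IsReducedAdjA A T Ts) :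
    (1/2) * Real.sqrt (opnA A (Ts ∘L T + T ∘L Ts)) ≤ (Real.sqrt 2 / 2) * Real.sqrt ((opnA A (ReA T Ts))^2 + (opnA A (ImA T Ts))^2) ∧
    (Real.sqrt 2 / 2) * Real.sqrt ((opnA A (ReA T Ts))^2 + (opnA A (ImA T Ts))^2) ≤ wA A T := by
  have hPsa := ReA_selfadj hA hTs
  have hQsa := ImA_selfadj hA hTs
  have hPb : ∀ x, vnA A (ReA T Ts x) ≤ ‖ReA T Ts‖ * vnA A x := selfadjA_vnA_le hA hA0 hPsa
  have hQb : ∀ x, vnA A (ImA T Ts x) ≤ ‖ImA T Ts‖ * vnA A x := selfadjA_vnA_le hA hA0 hQsa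
  have ha0 : 0 ≤ opnA A (ReA T Ts) := opnA_nonneg hA hA0 hPb
  have hb0 : 0 ≤ opnA A (ImA T Ts) := opnA_nonneg hA hA0 hQb
  have hPm := opnA_mul_vnA hA hA0 hPb
  have hQm := opnA_mul_vnA hA hA0 hQb
  constructor
  · have hR0 : opnA A (Ts ∘L T + T ∘L Ts)
        ≤ 2 * ((opnA A (ReA T Ts))^2 + (opnA A (ImA T Ts))^2) := by
      refine opnA_le hA hA0 ?_
      intro x hx
      have hxx : (Ts ∘L T + T ∘L Ts) x
          = (2 : ℂ) • (ReA T Ts (ReA T Ts x) + ImA T Ts (ImA T Ts x)) := by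
        simpa using TT_decomp (T := T) (Ts := Ts) x
      rw [hxx, vnA_smul]
      have h2 : ‖(2 : ℂ)‖ = 2 := by simp
      rw [h2]
      have h3 : vnA A (ReA T Ts (ReA T Ts x) + ImA T Ts (ImA T Ts x))
          ≤ (opnA A (ReA T Ts))^2 + (opnA A (ImA T Ts))^2 := by
        calc vnA A (ReA T Ts (ReA T Ts x) + ImA T Ts (ImA T Ts x))
            ≤ vnA A (ReA T Ts (ReA T Ts x)) + vnA A (ImA T Ts (ImA T Ts x)) :=
              vnA_add_le hA _ _
          _ ≤ opnA A (ReA T Ts) * vnA A (ReA T Ts x)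
              + opnA A (ImA T Ts) * vnA A (ImA T Ts x) := add_le_add (hPm _) (hQm _)
          _ ≤ opnA A (ReA T Ts) * (opnA A (ReA T Ts) * vnA A x)
              + opnA A (ImA T Ts) * (opnA A (ImA T Ts) * vnA A x) :=
              add_le_add (mul_le_mul_of_nonneg_left (hPm x) ha0)
                (mul_le_mul_of_nonneg_left (hQm x) hb0)
          _ = (opnA A (ReA T Ts))^2 + (opnA A (ImA T Ts))^2 := by rw [hx]; ring
      linarith
    have hs := Real.sqrt_le_sqrt hR0
    have hsplit : Real.sqrt (2 * ((opnA A (ReA T Ts))^2 + (opnA A (ImA T Ts))^2))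
        = Real.sqrt 2 * Real.sqrt ((opnA A (ReA T Ts))^2 + (opnA A (ImA T Ts))^2) :=
      Real.sqrt_mul (by norm_num) _
    calc (1/2) * Real.sqrt (opnA A (Ts ∘L T + T ∘L Ts))
        ≤ (1/2) * (Real.sqrt 2 * Real.sqrt ((opnA A (ReA T Ts))^2 + (opnA A (ImA T Ts))^2)) := by
          rw [← hsplit]
          exact mul_le_mul_of_nonneg_left hs (by norm_num)
      _ = (Real.sqrt 2 / 2) * Real.sqrt ((opnA A (ReA T Ts))^2 + (opnA A (ImA T Ts))^2) := by
          ring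
  · have haw : opnA A (ReA T Ts) ≤ wA A T :=
      le_trans (opnA_le_wA hA hA0 hPsa) (wA_ReA_le hA hA0 hTs)
    have hbw : opnA A (ImA T Ts) ≤ wA A T :=
      le_trans (opnA_le_wA hA hA0 hQsa) (wA_ImA_le hA hA0 hTs)
    have hw0 : 0 ≤ wA A T := le_trans ha0 haw
    have hsum : (opnA A (ReA T Ts))^2 + (opnA A (ImA T Ts))^2 ≤ 2 * (wA A T)^2 := by
      nlinarith
    have hs := Real.sqrt_le_sqrt hsum
    have h2 : Real.sqrt (2 * (wA A T)^2) = Real.sqrt 2 * wA A T := by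
      rw [Real.sqrt_mul (by norm_num), Real.sqrt_sq hw0]
    have hss : Real.sqrt 2 * Real.sqrt 2 = 2 := Real.mul_self_sqrt (by norm_num)
    calc (Real.sqrt 2 / 2) * Real.sqrt ((opnA A (ReA T Ts))^2 + (opnA A (ImA T Ts))^2)
        ≤ (Real.sqrt 2 / 2) * (Real.sqrt 2 * wA A T) := by
          rw [← h2]
          exact mul_le_mul_of_nonneg_left hs (by positivity)
      _ = wA A T := by nlinarith

end Main
end

section
/- Let T be a bounded linear operator on H admitting a reduced A-adjoint T^♯. Then (1/4)·‖T^♯T + TT^♯‖_A ≤ (1/4)·(2ω_A(T)² + √((‖Re_A(T)‖_A² − ‖Im_A(T)‖_A²)² + 4‖Re_A(T)·Im_A(T)‖_A²)) ≤ ω_A(T)². -/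
open ContinuousLinearMap

variable {H : Type*} [NormedAddCommGroup H] [InnerProductSpace ℂ H] [CompleteSpace H]

lemma aux_pow_le (q l K : ℝ) (hq : 0 ≤ q) (hl : 0 ≤ l) (hK : 0 ≤ K)
    (h : ∀ n : ℕ, q ^ (2^n) ≤ K * l ^ (2^n - 1)) : q ≤ l := by
  by_contra hc
  push_neg at hc
  rcases eq_or_lt_of_le hl with h0 | h0
  · have h1 := h 1
    rw [← h0] at h1
    norm_num at h1
    nlinarith
  · have hgt : 1 < q / l := (one_lt_div h0).mpr hc
    obtain ⟨n, hn⟩ := pow_unbounded_of_one_lt (K / l) hgt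
    have hN : n < 2^n := (Nat.lt_two_pow_self (n := n))
    have hmono : (q/l)^n ≤ (q/l)^(2^n) := pow_le_pow_right₀ hgt.le hN.le
    have h2 := h n
    have hpos : (0:ℝ) < l ^ (2^n) := pow_pos h0 _
    have hsplit : l ^ (2^n) = l ^ (2^n - 1) * l := by
      rw [← pow_succ]
      congr 1
      have := Nat.one_le_two_pow (n := n)
      omega
    have : (q/l)^(2^n) ≤ K / l := by
      rw [div_pow, div_le_div_iff₀ hpos h0]
      calc q ^ 2^n * l ≤ K * l ^ (2^n-1) * l := by nlinarith
        _ = K * l ^ (2^n) := by rw [hsplit]; ring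
    linarith [hmono.trans this]

lemma aux_cauchy2 (r s a b : ℝ) (hr : 0 ≤ r) (hs : 0 ≤ s) (ha : 0 ≤ a) (hb : 0 ≤ b) :
    r * a + s * b ≤ Real.sqrt (r^2 + s^2) * Real.sqrt (a^2 + b^2) := by
  have h1 : (r*a+s*b)^2 ≤ (r^2+s^2) * (a^2+b^2) := by nlinarith [sq_nonneg (r*b - s*a)]
  have h2 : r*a+s*b = Real.sqrt ((r*a+s*b)^2) := (Real.sqrt_sq (by positivity)).symm
  rw [h2, ← Real.sqrt_mul (by positivity)]
  exact Real.sqrt_le_sqrt h1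

lemma aux_mat2 (α β c u v : ℝ) (hα : 0 ≤ α) (hβ : 0 ≤ β) (hc : 0 ≤ c)
    (hu : 0 ≤ u) (hv : 0 ≤ v) :
    (α*u + c*v)^2 + (c*u + β*v)^2 ≤
      ((α + β + Real.sqrt ((α-β)^2 + 4*c^2))/2)^2 * (u^2 + v^2) := by
  set E := Real.sqrt ((α-β)^2 + 4*c^2) with hE
  have hE0 : 0 ≤ E := Real.sqrt_nonneg _
  have hE2 : E^2 = (α-β)^2 + 4*c^2 := Real.sq_sqrt (by positivity)
  have hE3 : α - β ≤ E := by
    nlinarith [sq_nonneg (E - (α - β))]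
  have hE4 : β - α ≤ E := by nlinarith [sq_nonneg (E + (α - β))]
  -- quadratic form bound: α u^2 + β v^2 + 2 c u v ≤ λ (u^2+v^2)
  set lam := (α + β + E)/2 with hlam
  have hlam0 : 0 ≤ lam := by positivity
  have hprod : (lam - α) * (lam - β) = c^2 := by
    field_simp [hlam]
    nlinarith [hE2]
  have hlamα : 0 ≤ lam - α := by simp only [hlam]; linarith
  have hlamβ : 0 ≤ lam - β := by simp only [hlam]; linarith
  have hQf : α*u^2 + β*v^2 + 2*c*(u*v) ≤ lam * (u^2+v^2) := by
    set p := Real.sqrt (lam - α) with hp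
    set q := Real.sqrt (lam - β) with hq
    have hp2 : p^2 = lam - α := Real.sq_sqrt hlamα
    have hq2 : q^2 = lam - β := Real.sq_sqrt hlamβ
    have hpq : p * q = c := by
      rw [hp, hq, ← Real.sqrt_mul hlamα, hprod, Real.sqrt_sq hc]
    have e1 : p^2*u^2 = (lam-α)*u^2 := by rw [hp2]
    have e2 : q^2*v^2 = (lam-β)*v^2 := by rw [hq2]
    have e3 : p*q*(u*v) = c*(u*v) := by rw [hpq]
    nlinarith [sq_nonneg (p*u - q*v), e1, e2, e3]
  have hchar : lam^2 = (α+β)*lam - (α*β - c^2) := by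
    field_simp [hlam]
    nlinarith [hE2]
  nlinarith [hQf, mul_nonneg (add_nonneg hα hβ) (mul_nonneg hu hv), sq_nonneg (u*v)]

section
variable (A P : H →L[ℂ] H)

lemma aux_innA (hP : ContinuousLinearMap.adjoint P = P) (hPP : P ∘L P = A) (x y : H) :
    (inner ℂ (A x) y : ℂ) = inner ℂ (P x) (P y) := by
  rw [← hPP]
  simp only [ContinuousLinearMap.comp_apply]
  have h1 : P (P x) = ContinuousLinearMap.adjoint P (P x) := by rw [hP]
  rw [h1]
  exact ContinuousLinearMap.adjoint_inner_left P y (P x)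

lemma aux_vnA (hP : ContinuousLinearMap.adjoint P = P) (hPP : P ∘L P = A) (x : H) :
    vnA A x = ‖P x‖ := by
  unfold vnA
  rw [aux_innA A P hP hPP]
  rw [inner_self_eq_norm_sq (𝕜 := ℂ)]
  exact Real.sqrt_sq (norm_nonneg _)

lemma aux_opnA_nonneg (X : H →L[ℂ] H) : 0 ≤ opnA A X := by
  apply Real.sSup_nonneg
  rintro y ⟨x, -, rfl⟩
  exact Real.sqrt_nonneg _

lemma aux_wA_nonneg (X : H →L[ℂ] H) : 0 ≤ wA A X := by
  apply Real.sSup_nonneg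
  rintro y ⟨x, -, rfl⟩
  exact norm_nonneg _

variable (hP : ContinuousLinearMap.adjoint P = P) (hPP : P ∘L P = A)
include hP hPP

lemma aux_opnA_le (X : H →L[ℂ] H) (m : ℝ) (hm : 0 ≤ m)
    (h : ∀ x, ‖P x‖ = 1 → ‖P (X x)‖ ≤ m) : opnA A X ≤ m := by
  apply Real.sSup_le _ hm
  rintro y ⟨x, hx, rfl⟩
  simp only [Set.mem_setOf_eq, aux_vnA A P hP hPP] at hx
  simp only [aux_vnA A P hP hPP]
  exact h x hx

lemma aux_le_opnA (X : H →L[ℂ] H) (C : ℝ) (hC : ∀ x, ‖P (X x)‖ ≤ C * ‖P x‖)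
    (x : H) (hx : ‖P x‖ = 1) : ‖P (X x)‖ ≤ opnA A X := by
  apply le_csSup
  · refine ⟨max C 0, ?_⟩
    rintro y ⟨x', hx', rfl⟩
    simp only [Set.mem_setOf_eq, aux_vnA A P hP hPP] at hx'
    simp only [aux_vnA A P hP hPP]
    calc ‖P (X x')‖ ≤ C * ‖P x'‖ := hC x'
      _ = C := by rw [hx', mul_one]
      _ ≤ max C 0 := le_max_left _ _
  · exact ⟨x, by simpa [Set.mem_setOf_eq, aux_vnA A P hP hPP] using hx,
      by simp [aux_vnA A P hP hPP]⟩

lemma aux_opnA_mul (X : H →L[ℂ] H) (C : ℝ) (hC : ∀ x, ‖P (X x)‖ ≤ C * ‖P x‖)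
    (x : H) : ‖P (X x)‖ ≤ opnA A X * ‖P x‖ := by
  rcases eq_or_ne (‖P x‖) 0 with h0 | h0
  · rw [h0, mul_zero]
    have := hC x
    rw [h0, mul_zero] at this
    exact this
  · have ht : 0 < ‖P x‖ := lt_of_le_of_ne (norm_nonneg _) (Ne.symm h0)
    set t := ‖P x‖ with htdef
    have hx1 : ‖P (t⁻¹ • x)‖ = 1 := by
      rw [map_smul_of_tower, norm_smul, Real.norm_eq_abs, abs_of_pos (inv_pos.mpr ht),
        ← htdef]
      exact inv_mul_cancel₀ h0
    have h2 := aux_le_opnA A P hP hPP X C hC (t⁻¹ • x) hx1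
    rw [map_smul_of_tower, map_smul_of_tower, norm_smul, Real.norm_eq_abs,
      abs_of_pos (inv_pos.mpr ht)] at h2
    calc ‖P (X x)‖ = (t⁻¹ * ‖P (X x)‖) * t := by field_simp
      _ ≤ opnA A X * t := by
          apply mul_le_mul_of_nonneg_right h2 ht.le

lemma aux_le_wA (T : H →L[ℂ] H) (C : ℝ) (hC : ∀ x, ‖P (T x)‖ ≤ C * ‖P x‖)
    (x : H) (hx : ‖P x‖ = 1) : ‖(inner ℂ (A (T x)) x : ℂ)‖ ≤ wA A T := by
  apply le_csSup
  · refine ⟨max C 0, ?_⟩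
    rintro y ⟨x', hx', rfl⟩
    simp only [Set.mem_setOf_eq, aux_vnA A P hP hPP] at hx'
    calc ‖(inner ℂ (A (T x')) x' : ℂ)‖ = ‖(inner ℂ (P (T x')) (P x') : ℂ)‖ := by
            rw [aux_innA A P hP hPP]
      _ ≤ ‖P (T x')‖ * ‖P x'‖ := norm_inner_le_norm _ _
      _ ≤ (C * ‖P x'‖) * ‖P x'‖ := by
            apply mul_le_mul_of_nonneg_right (hC x') (norm_nonneg _)
      _ = C := by rw [hx']; ring
      _ ≤ max C 0 := le_max_left _ _
  · exact ⟨x, by simpa [Set.mem_setOf_eq, aux_vnA A P hP hPP] using hx, rfl⟩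

lemma aux_wA_mul (T : H →L[ℂ] H) (C : ℝ) (hC : ∀ x, ‖P (T x)‖ ≤ C * ‖P x‖)
    (x : H) : ‖(inner ℂ (A (T x)) x : ℂ)‖ ≤ wA A T * ‖P x‖^2 := by
  rcases eq_or_ne (‖P x‖) 0 with h0 | h0
  · rw [h0]
    rw [zero_pow two_ne_zero, mul_zero]
    calc ‖(inner ℂ (A (T x)) x : ℂ)‖ = ‖(inner ℂ (P (T x)) (P x) : ℂ)‖ := by
            rw [aux_innA A P hP hPP]
      _ ≤ ‖P (T x)‖ * ‖P x‖ := norm_inner_le_norm _ _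
      _ ≤ 0 := by rw [h0, mul_zero]
  · have ht : 0 < ‖P x‖ := lt_of_le_of_ne (norm_nonneg _) (Ne.symm h0)
    set t := ‖P x‖ with htdef
    have hx1 : ‖P (t⁻¹ • x)‖ = 1 := by
      rw [map_smul_of_tower, norm_smul, Real.norm_eq_abs, abs_of_pos (inv_pos.mpr ht),
        ← htdef]
      exact inv_mul_cancel₀ h0
    have h2 := aux_le_wA A P hP hPP T C hC (t⁻¹ • x) hx1
    have h3 : (inner ℂ (A (T (t⁻¹ • x))) (t⁻¹ • x) : ℂ)
        = ((t⁻¹ : ℝ) : ℂ) * (((t⁻¹ : ℝ)) : ℂ) * inner ℂ (A (T x)) x := by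
      rw [map_smul_of_tower, map_smul_of_tower,
        RCLike.real_smul_eq_coe_smul (K := ℂ) t⁻¹ (A (T x)),
        RCLike.real_smul_eq_coe_smul (K := ℂ) t⁻¹ x,
        inner_smul_left, inner_smul_right, RCLike.conj_ofReal]
      exact (mul_assoc _ _ _).symm
    rw [h3, norm_mul, norm_mul] at h2
    have h4 : ‖((t⁻¹ : ℝ) : ℂ)‖ = t⁻¹ := by
      rw [Complex.norm_real, Real.norm_eq_abs, abs_of_pos (inv_pos.mpr ht)]
    rw [h4] at h2
    have hinv : t⁻¹ * t = 1 := inv_mul_cancel₀ h0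
    have key : t⁻¹ * t⁻¹ * ‖(inner ℂ (A (T x)) x : ℂ)‖ * t^2
        = ‖(inner ℂ (A (T x)) x : ℂ)‖ := by
      calc t⁻¹ * t⁻¹ * ‖(inner ℂ (A (T x)) x : ℂ)‖ * t^2
          = (t⁻¹*t)*(t⁻¹*t)*‖(inner ℂ (A (T x)) x : ℂ)‖ := by ring
        _ = ‖(inner ℂ (A (T x)) x : ℂ)‖ := by rw [hinv]; ring
    have h5 := mul_le_mul_of_nonneg_right h2 (le_of_lt (pow_pos ht 2))
    linarith [h5, key.ge, key.le]

omit hP hPP in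
lemma aux_polar (B : H →L[ℂ] H) (hB : ContinuousLinearMap.adjoint B = B) (x y : H) :
    4 * RCLike.re (inner ℂ (B x) y : ℂ) =
      RCLike.re (inner ℂ (B (x+y)) (x+y) : ℂ) - RCLike.re (inner ℂ (B (x-y)) (x-y) : ℂ) := by
  have hc : (inner ℂ (B y) x : ℂ) = (starRingEnd ℂ) (inner ℂ (B x) y : ℂ) := by
    have h1 : (inner ℂ (B y) x : ℂ) = inner ℂ y (B x) := by
      conv_lhs => rw [← hB]
      exact ContinuousLinearMap.adjoint_inner_left B x y
    rw [h1, ← inner_conj_symm]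
  rw [map_add, map_sub]
  rw [inner_add_left, inner_add_right, inner_add_right,
    inner_sub_left, inner_sub_right, inner_sub_right]
  simp only [map_add, map_sub, hc, RCLike.conj_re]
  ring

omit hP hPP in
lemma aux_powrel (S : H →L[ℂ] H) (hS : A ∘L S = ContinuousLinearMap.adjoint S ∘L A) :
    ∀ m : ℕ, A ∘L (S^m) = ContinuousLinearMap.adjoint (S^m) ∘L A := by
  intro m
  induction m with
  | zero =>
    simp only [pow_zero]
    rw [← ContinuousLinearMap.star_eq_adjoint, star_one]
    simp [ContinuousLinearMap.one_def]
  | succ n ih =>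
    have h1 : (S^(n+1)) = S ∘L (S^n : H →L[ℂ] H) := by rw [pow_succ']; rfl
    have h2 : (S^(n+1)) = (S^n : H →L[ℂ] H) ∘L S := by rw [pow_succ]; rfl
    calc A ∘L (S^(n+1)) = (A ∘L S) ∘L S^n := by
          rw [h1, ContinuousLinearMap.comp_assoc]
      _ = ContinuousLinearMap.adjoint S ∘L (A ∘L (S^n)) := by
          rw [hS, ContinuousLinearMap.comp_assoc]
      _ = (ContinuousLinearMap.adjoint S ∘L ContinuousLinearMap.adjoint (S^n)) ∘L A := by
          rw [ih, ContinuousLinearMap.comp_assoc]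
      _ = ContinuousLinearMap.adjoint (S^(n+1)) ∘L A := by
          rw [← ContinuousLinearMap.adjoint_comp, ← h2]

omit hP hPP in
lemma aux_pow_split (S : H →L[ℂ] H) (hS : A ∘L S = ContinuousLinearMap.adjoint S ∘L A)
    (m : ℕ) (x : H) :
    (inner ℂ (A ((S^m) x)) ((S^m) x) : ℂ) = inner ℂ (A ((S^(2*m)) x)) x := by
  have hsplit : (S^(2*m)) x = (S^m) ((S^m) x) := by
    rw [two_mul, pow_add]; rfl
  rw [hsplit]
  have h3 : A ((S^m) ((S^m) x)) = (ContinuousLinearMap.adjoint (S^m)) (A ((S^m) x)) := by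
    have := congrArg (fun (X : H →L[ℂ] H) => X ((S^m) x)) (aux_powrel A S hS m)
    simpa using this
  rw [h3, ContinuousLinearMap.adjoint_inner_left]

-- iteration lemma: A-selfadjoint operators are A-bounded with constant ‖S‖
lemma aux_L1 (S : H →L[ℂ] H) (hS : A ∘L S = ContinuousLinearMap.adjoint S ∘L A) (x : H) :
    ‖P (S x)‖ ≤ ‖S‖ * ‖P x‖ := by
  set f : ℕ → ℝ := fun m => ‖P ((S^m) x)‖ with hf
  have hsq : ∀ m : ℕ, f m ^ 2 ≤ f (2*m) * f 0 := by
    intro m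
    have h1 : ((f m : ℝ))^2 = RCLike.re (inner ℂ (A ((S^m) x)) ((S^m) x) : ℂ) := by
      rw [aux_innA A P hP hPP, inner_self_eq_norm_sq (𝕜 := ℂ)]
    have h4 : RCLike.re (inner ℂ (A ((S^(2*m)) x)) x : ℂ) ≤ f (2*m) * f 0 := by
      rw [aux_innA A P hP hPP]
      calc RCLike.re (inner ℂ (P ((S^(2*m)) x)) (P x) : ℂ)
          ≤ ‖(inner ℂ (P ((S^(2*m)) x)) (P x) : ℂ)‖ := RCLike.re_le_norm _
        _ ≤ ‖P ((S^(2*m)) x)‖ * ‖P x‖ := norm_inner_le_norm _ _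
        _ = f (2*m) * f 0 := by simp [hf, pow_zero]
    rw [h1, aux_pow_split A S hS m x]
    exact h4
  have hf0 : ∀ m, 0 ≤ f m := fun m => norm_nonneg _
  have hfb : ∀ m, 0 < m → f m ≤ ‖P‖ * ‖S‖^m * ‖x‖ := by
    intro m hm
    calc f m ≤ ‖P‖ * ‖(S^m) x‖ := ContinuousLinearMap.le_opNorm _ _
      _ ≤ ‖P‖ * (‖S^m‖ * ‖x‖) := by
          apply mul_le_mul_of_nonneg_left (ContinuousLinearMap.le_opNorm _ _) (norm_nonneg _)
      _ ≤ ‖P‖ * (‖S‖^m * ‖x‖) := by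
          apply mul_le_mul_of_nonneg_left _ (norm_nonneg _)
          exact mul_le_mul_of_nonneg_right (norm_pow_le' S hm) (norm_nonneg _)
      _ = ‖P‖ * ‖S‖^m * ‖x‖ := by ring
  have hind : ∀ n : ℕ, f 1 ^ (2^n) ≤ f 0 ^ (2^n - 1) * f (2^n) := by
    intro n
    induction n with
    | zero => simp
    | succ n ih =>
      have h2n : 1 ≤ 2^n := Nat.one_le_two_pow
      have e1 : 2^(n+1) = 2^n * 2 := by ring
      have e2 : 2^(n+1) - 1 = (2^n - 1) * 2 + 1 := by omega
      calc f 1 ^ (2^(n+1)) = (f 1 ^ (2^n))^2 := by rw [e1, pow_mul]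
        _ ≤ (f 0 ^ (2^n - 1) * f (2^n))^2 := by
            apply pow_le_pow_left₀ (by positivity) ih
        _ = (f 0 ^ (2^n-1))^2 * (f (2^n))^2 := by ring
        _ ≤ (f 0 ^ (2^n-1))^2 * (f (2*2^n) * f 0) := by
            apply mul_le_mul_of_nonneg_left (hsq _) (by positivity)
        _ = f 0 ^ (2^(n+1) - 1) * f (2^(n+1)) := by
            have e3 : 2 * 2^n = 2^(n+1) := by ring
            rw [e2, pow_add, pow_mul, pow_one, e3]
            ring
  have hgoal : f 1 ≤ ‖S‖ * f 0 := by
    apply aux_pow_le _ _ (‖S‖ * (‖P‖ * ‖x‖)) (hf0 1) (by positivity) (by positivity)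
    intro n
    have h2n : 1 ≤ 2^n := Nat.one_le_two_pow
    calc f 1 ^ 2^n ≤ f 0 ^ (2^n - 1) * f (2^n) := hind n
      _ ≤ f 0 ^ (2^n - 1) * (‖P‖ * ‖S‖^(2^n) * ‖x‖) := by
          apply mul_le_mul_of_nonneg_left (hfb _ (by positivity)) (by positivity)
      _ = ‖S‖ * (‖P‖ * ‖x‖) * (‖S‖ * f 0) ^ (2^n - 1) := by
          have e4 : ‖S‖^(2^n) = ‖S‖ * ‖S‖^(2^n - 1) := by
            rw [← pow_succ']
            congr 1
            omega
          rw [e4, mul_pow]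
          ring
  have hf1 : f 1 = ‖P (S x)‖ := by
    simp [hf, pow_one]
  have hff0 : f 0 = ‖P x‖ := by
    simp [hf, pow_zero]
  rw [hf1, hff0] at hgoal
  exact hgoal

lemma aux_adjA : ContinuousLinearMap.adjoint A = A := by
  rw [← hPP, ContinuousLinearMap.adjoint_comp, hP]

lemma aux_wbound (X : H →L[ℂ] H) (hX : A ∘L X = ContinuousLinearMap.adjoint X ∘L A)
    (m : ℝ) (hm : 0 ≤ m)
    (hq : ∀ u : H, |RCLike.re (inner ℂ (A (X u)) u : ℂ)| ≤ m * ‖P u‖^2) :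
    opnA A X ≤ m := by
  have hAsa : ContinuousLinearMap.adjoint (A ∘L X) = A ∘L X := by
    rw [ContinuousLinearMap.adjoint_comp, aux_adjA A P hP hPP, ← hX]
  apply aux_opnA_le A P hP hPP X m hm
  intro x hx
  rcases eq_or_ne (‖P (X x)‖) 0 with h0 | h0
  · rw [h0]; exact hm
  · have ht : 0 < ‖P (X x)‖ := lt_of_le_of_ne (norm_nonneg _) (Ne.symm h0)
    set t := ‖P (X x)‖ with htd
    set y := t⁻¹ • X x with hy
    have hy1 : ‖P y‖ = 1 := by
      rw [hy, map_smul_of_tower, norm_smul, Real.norm_eq_abs,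
        abs_of_pos (inv_pos.mpr ht), ← htd]
      exact inv_mul_cancel₀ h0
    have hre : RCLike.re (inner ℂ ((A ∘L X) x) y : ℂ) = t := by
      rw [ContinuousLinearMap.comp_apply, hy,
        RCLike.real_smul_eq_coe_smul (K := ℂ) t⁻¹ (X x), inner_smul_right,
        aux_innA A P hP hPP, inner_self_eq_norm_sq_to_K, ← htd]
      simp only [← RCLike.ofReal_pow, ← RCLike.ofReal_mul, RCLike.ofReal_re]
      rw [sq, ← mul_assoc, inv_mul_cancel₀ h0, one_mul]
    have hpol := aux_polar (A ∘L X) hAsa x y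
    rw [hre] at hpol
    have hb1 : RCLike.re (inner ℂ ((A ∘L X) (x+y)) (x+y) : ℂ) ≤ m * ‖P (x+y)‖^2 := by
      rw [ContinuousLinearMap.comp_apply]
      exact (abs_le.mp (hq (x+y))).2
    have hb2 : -(m * ‖P (x-y)‖^2) ≤ RCLike.re (inner ℂ ((A ∘L X) (x-y)) (x-y) : ℂ) := by
      rw [ContinuousLinearMap.comp_apply]
      exact (abs_le.mp (hq (x-y))).1
    have hpar : ‖P (x+y)‖^2 + ‖P (x-y)‖^2 = 2*‖P x‖^2 + 2*‖P y‖^2 := by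
      rw [map_add, map_sub]
      have := parallelogram_law_with_norm (𝕜 := ℂ) (P x) (P y)
      nlinarith [this]
    rw [hx, hy1] at hpar
    nlinarith [hpol, hb1, hb2, hpar]

lemma aux_dual (X X' : H →L[ℂ] H)
    (hX' : A ∘L X' = ContinuousLinearMap.adjoint X ∘L A)
    (C : ℝ) (hC : ∀ u, ‖P (X u)‖ ≤ C * ‖P u‖)
    (x : H) : ‖P (X' x)‖ ≤ opnA A X * ‖P x‖ := by
  rcases eq_or_ne (‖P (X' x)‖) 0 with h0 | h0
  · rw [h0]
    exact mul_nonneg (aux_opnA_nonneg A X) (norm_nonneg _)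
  · have ht : 0 < ‖P (X' x)‖ := lt_of_le_of_ne (norm_nonneg _) (Ne.symm h0)
    have key : ‖P (X' x)‖^2 ≤ (opnA A X * ‖P x‖) * ‖P (X' x)‖ := by
      have h1 : (‖P (X' x)‖:ℝ)^2 = RCLike.re (inner ℂ (A (X' x)) (X' x) : ℂ) := by
        rw [aux_innA A P hP hPP, inner_self_eq_norm_sq (𝕜 := ℂ)]
      have h2 : (inner ℂ (A (X' x)) (X' x) : ℂ) = inner ℂ (A x) (X (X' x)) := by
        have h3 : A (X' x) = (ContinuousLinearMap.adjoint X) (A x) := by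
          have := congrArg (fun (Z : H →L[ℂ] H) => Z x) hX'
          simpa using this
        rw [h3, ContinuousLinearMap.adjoint_inner_left]
      rw [h1, h2, aux_innA A P hP hPP]
      calc RCLike.re (inner ℂ (P x) (P (X (X' x))) : ℂ)
          ≤ ‖(inner ℂ (P x) (P (X (X' x))) : ℂ)‖ := RCLike.re_le_norm _
        _ ≤ ‖P x‖ * ‖P (X (X' x))‖ := norm_inner_le_norm _ _
        _ ≤ ‖P x‖ * (opnA A X * ‖P (X' x)‖) := by
            apply mul_le_mul_of_nonneg_left (aux_opnA_mul A P hP hPP X C hC _) (norm_nonneg _)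
        _ = (opnA A X * ‖P x‖) * ‖P (X' x)‖ := by ring
    nlinarith [key, ht]

end

set_option maxHeartbeats 2000000 in
theorem stmt2 (A T Ts : H →L[ℂ] H) (hA : A.IsPositive) (hA0 : A ≠ 0)
    (hTs : IsReducedAdjA A T Ts) :
    (1/4) * opnA A (Ts ∘L T + T ∘L Ts) ≤ (1/4) * (2 * (wA A T)^2 + Real.sqrt (((opnA A (ReA T Ts))^2 - (opnA A (ImA T Ts))^2)^2 + 4 * (opnA A (ReA T Ts ∘L ImA T Ts))^2)) ∧
    (1/4) * (2 * (wA A T)^2 + Real.sqrt (((opnA A (ReA T Ts))^2 - (opnA A (ImA T Ts))^2)^2 + 4 * (opnA A (ReA T Ts ∘L ImA T Ts))^2)) ≤ (wA A T)^2 := by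
  obtain ⟨P, hP, hPP⟩ : ∃ P : H →L[ℂ] H, ContinuousLinearMap.adjoint P = P ∧ P ∘L P = A := by
    have h0 : (0:H →L[ℂ] H) ≤ A := (ContinuousLinearMap.nonneg_iff_isPositive A).mpr hA
    refine ⟨CFC.sqrt A, isSelfAdjoint_iff'.mp (IsSelfAdjoint.of_nonneg (CFC.sqrt_nonneg A)), ?_⟩
    rw [← ContinuousLinearMap.mul_def]
    exact CFC.sqrt_mul_sqrt_self A h0
  have hconv : ∀ X : H →L[ℂ] H, A * X = star X * A →
      A ∘L X = ContinuousLinearMap.adjoint X ∘L A := by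
    intro X h
    rw [← ContinuousLinearMap.mul_def, ← ContinuousLinearMap.mul_def,
      ← ContinuousLinearMap.star_eq_adjoint]
    exact h
  have h1 : A * Ts = star T * A := by
    rw [ContinuousLinearMap.mul_def, ContinuousLinearMap.mul_def,
      ContinuousLinearMap.star_eq_adjoint]
    exact hTs.1
  have h2 : A * T = star Ts * A := by
    calc A * T = star (star T * A) := by rw [star_mul, star_star, hA.isSelfAdjoint.star_eq]
      _ = star (A * Ts) := by rw [h1]
      _ = star Ts * A := by rw [star_mul, hA.isSelfAdjoint.star_eq]
  set Rr := ReA T Ts with hRrdef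
  set Ii := ImA T Ts with hIidef
  have hstar2 : (starRingEnd ℂ) ((2:ℂ)⁻¹) = (2:ℂ)⁻¹ := by
    rw [← Complex.star_def]
    norm_num
  have hstar2I : (starRingEnd ℂ) ((2*Complex.I)⁻¹) = -((2*Complex.I)⁻¹) := by
    have h : star (2*Complex.I) = -(2*Complex.I) := by
      simp [Complex.star_def, Complex.conj_I]
    rw [← Complex.star_def, star_inv₀, h, inv_neg]
  have hRmul : A * Rr = star Rr * A := by
    rw [hRrdef]; unfold ReA
    rw [star_smul, mul_smul_comm, smul_mul_assoc, mul_add, star_add, add_mul, h1, h2]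
    rw [show star ((2:ℂ)⁻¹) = (2:ℂ)⁻¹ from hstar2]
    module
  have hImul : A * Ii = star Ii * A := by
    rw [hIidef]; unfold ImA
    rw [star_smul, mul_smul_comm, star_sub, mul_sub, h1, h2]
    rw [show star ((2*Complex.I)⁻¹) = -((2*Complex.I)⁻¹) from hstar2I]
    rw [smul_mul_assoc, sub_mul]
    module
  have hR : A ∘L Rr = ContinuousLinearMap.adjoint Rr ∘L A := hconv Rr hRmul
  have hI : A ∘L Ii = ContinuousLinearMap.adjoint Ii ∘L A := hconv Ii hImul
  set Q : H →L[ℂ] H := Rr ∘L Rr + Ii ∘L Ii with hQdef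
  have hpart : ∀ X : H →L[ℂ] H, A * X = star X * A → A * (X*X) = star (X*X) * A := by
    intro X h
    calc A * (X*X) = (A*X)*X := (mul_assoc _ _ _).symm
      _ = (star X * A) * X := by rw [h]
      _ = star X * (A * X) := mul_assoc _ _ _
      _ = star X * (star X * A) := by rw [h]
      _ = star (X*X) * A := by rw [star_mul, mul_assoc]
  have hQmul : A * Q = star Q * A := by
    have e : Q = Rr * Rr + Ii * Ii := rfl
    rw [e, mul_add, star_add, add_mul, hpart Rr hRmul, hpart Ii hImul]
  have hQ : A ∘L Q = ContinuousLinearMap.adjoint Q ∘L A := hconv Q hQmul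
  have hIRmul : A * (Ii * Rr) = star (Rr * Ii) * A := by
    rw [← mul_assoc, hImul, mul_assoc, hRmul, ← mul_assoc, ← star_mul]
  have hIR : A ∘L (Ii ∘L Rr) = ContinuousLinearMap.adjoint (Rr ∘L Ii) ∘L A := by
    rw [← ContinuousLinearMap.mul_def, ← ContinuousLinearMap.mul_def,
      ← ContinuousLinearMap.star_eq_adjoint]
    exact hIRmul
  -- operator identities
  have hT : T = Rr + Complex.I • Ii := by
    rw [hRrdef, hIidef]; unfold ReA ImA
    rw [smul_smul]
    have hi : Complex.I * (2*Complex.I)⁻¹ = (2:ℂ)⁻¹ := by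
      field_simp [Complex.I_ne_zero]
    rw [hi]
    module
  have hM : Ts ∘L T + T ∘L Ts = (2:ℂ) • Q := by
    rw [hQdef, hRrdef, hIidef]; unfold ReA ImA
    have expand : ∀ (c : ℂ) (X Y : H →L[ℂ] H), (c • X) ∘L (c • Y) = (c*c) • (X ∘L Y) := by
      intro c X Y
      rw [← ContinuousLinearMap.mul_def, ← ContinuousLinearMap.mul_def,
        smul_mul_assoc, mul_smul_comm, smul_smul]
    rw [expand, expand]
    have c1 : (2:ℂ)⁻¹ * (2:ℂ)⁻¹ = (4:ℂ)⁻¹ := by norm_num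
    have c2 : (2*Complex.I)⁻¹ * (2*Complex.I)⁻¹ = -(4:ℂ)⁻¹ := by
      rw [← mul_inv]
      have h4 : (2*Complex.I) * (2*Complex.I) = -4 := by
        ring_nf
        rw [Complex.I_sq]
        ring
      rw [h4, inv_neg]
    rw [c1, c2]
    have hmul : ∀ X Y : H →L[ℂ] H, X ∘L Y = X * Y := fun _ _ => rfl
    simp only [hmul]
    rw [add_mul, mul_add, mul_add, sub_mul, mul_sub, mul_sub]
    module
  -- seminorm bounds
  have cR : ∀ x, ‖P (Rr x)‖ ≤ ‖Rr‖ * ‖P x‖ := aux_L1 A P hP hPP Rr hR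
  have cI : ∀ x, ‖P (Ii x)‖ ≤ ‖Ii‖ * ‖P x‖ := aux_L1 A P hP hPP Ii hI
  have cT : ∀ x, ‖P (T x)‖ ≤ (‖Rr‖ + ‖Ii‖) * ‖P x‖ := by
    intro x
    have hTx : T x = Rr x + Complex.I • Ii x := by
      conv_lhs => rw [hT]
      rfl
    rw [hTx, map_add, map_smul]
    calc ‖P (Rr x) + Complex.I • P (Ii x)‖
        ≤ ‖P (Rr x)‖ + ‖Complex.I • P (Ii x)‖ := norm_add_le _ _
      _ = ‖P (Rr x)‖ + ‖P (Ii x)‖ := by rw [norm_smul, Complex.norm_I, one_mul]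
      _ ≤ ‖Rr‖ * ‖P x‖ + ‖Ii‖ * ‖P x‖ := add_le_add (cR x) (cI x)
      _ = (‖Rr‖ + ‖Ii‖) * ‖P x‖ := by ring
  have cRI : ∀ x, ‖P ((Rr ∘L Ii) x)‖ ≤ (‖Rr‖ * ‖Ii‖) * ‖P x‖ := by
    intro x
    rw [ContinuousLinearMap.comp_apply]
    calc ‖P (Rr (Ii x))‖ ≤ ‖Rr‖ * ‖P (Ii x)‖ := cR _
      _ ≤ ‖Rr‖ * (‖Ii‖ * ‖P x‖) := mul_le_mul_of_nonneg_left (cI x) (norm_nonneg _)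
      _ = (‖Rr‖ * ‖Ii‖) * ‖P x‖ := by ring
  set r := opnA A Rr with hrdef
  set s := opnA A Ii with hsdef
  set cc := opnA A (Rr ∘L Ii) with hccdef
  set w := wA A T with hwdef
  have r0 : 0 ≤ r := aux_opnA_nonneg A Rr
  have s0 : 0 ≤ s := aux_opnA_nonneg A Ii
  have c0 : 0 ≤ cc := aux_opnA_nonneg A (Rr ∘L Ii)
  have w0 : 0 ≤ w := aux_wA_nonneg A T
  have mulR : ∀ x, ‖P (Rr x)‖ ≤ r * ‖P x‖ := aux_opnA_mul A P hP hPP Rr ‖Rr‖ cR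
  have mulI : ∀ x, ‖P (Ii x)‖ ≤ s * ‖P x‖ := aux_opnA_mul A P hP hPP Ii ‖Ii‖ cI
  have mulRI : ∀ x, ‖P ((Rr ∘L Ii) x)‖ ≤ cc * ‖P x‖ :=
    aux_opnA_mul A P hP hPP (Rr ∘L Ii) (‖Rr‖ * ‖Ii‖) cRI
  have mulIR : ∀ x, ‖P ((Ii ∘L Rr) x)‖ ≤ cc * ‖P x‖ := fun x =>
    aux_dual A P hP hPP (Rr ∘L Ii) (Ii ∘L Rr) hIR (‖Rr‖ * ‖Ii‖) cRI x
  have wT : ∀ x, ‖(inner ℂ (A (T x)) x : ℂ)‖ ≤ w * ‖P x‖^2 :=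
    aux_wA_mul A P hP hPP T (‖Rr‖ + ‖Ii‖) cT
  -- conjugation identity
  have hconjz : ∀ u : H, (inner ℂ (A (Ts u)) u : ℂ)
      = (starRingEnd ℂ) (inner ℂ (A (T u)) u : ℂ) := by
    intro u
    have hATs : A (Ts u) = (ContinuousLinearMap.adjoint T) (A u) := by
      have := congrArg (fun Z : H →L[ℂ] H => Z u) hTs.1
      simpa using this
    rw [hATs, ContinuousLinearMap.adjoint_inner_left]
    rw [aux_innA A P hP hPP u (T u), aux_innA A P hP hPP (T u) u]
    exact (inner_conj_symm _ _).symm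
  have hqR : ∀ u : H, |RCLike.re (inner ℂ (A (Rr u)) u : ℂ)| ≤ w * ‖P u‖^2 := by
    intro u
    set z := (inner ℂ (A (T u)) u : ℂ) with hz
    have hRu : Rr u = (2:ℂ)⁻¹ • (T u + Ts u) := by
      conv_lhs => rw [hRrdef]
      rfl
    have hval : (inner ℂ (A (Rr u)) u : ℂ) = ((z.re : ℝ) : ℂ) := by
      calc (inner ℂ (A (Rr u)) u : ℂ)
          = (2:ℂ)⁻¹ * ((inner ℂ (A (T u)) u : ℂ) + inner ℂ (A (Ts u)) u) := by
            rw [hRu, map_smul, inner_smul_left, hstar2, map_add, inner_add_left]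
        _ = (2:ℂ)⁻¹ * (z + (starRingEnd ℂ) z) := by rw [hconjz, hz]
        _ = ((z.re : ℝ) : ℂ) := by rw [Complex.add_conj]; push_cast; ring
    rw [hval]
    have hre : RCLike.re (((z.re : ℝ) : ℂ)) = z.re := Complex.ofReal_re _
    rw [hre]
    calc |z.re| = |RCLike.re z| := rfl
      _ ≤ ‖z‖ := RCLike.abs_re_le_norm z
      _ ≤ w * ‖P u‖^2 := wT u
  have hqI : ∀ u : H, |RCLike.re (inner ℂ (A (Ii u)) u : ℂ)| ≤ w * ‖P u‖^2 := by
    intro u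
    set z := (inner ℂ (A (T u)) u : ℂ) with hz
    have hIu : Ii u = (2*Complex.I)⁻¹ • (T u - Ts u) := by
      conv_lhs => rw [hIidef]
      rfl
    have h2I : (2*Complex.I)⁻¹ * (2*Complex.I) = 1 :=
      inv_mul_cancel₀ (by simp [Complex.I_ne_zero])
    have hval : (inner ℂ (A (Ii u)) u : ℂ) = (((-z.im : ℝ)) : ℂ) := by
      calc (inner ℂ (A (Ii u)) u : ℂ)
          = -((2*Complex.I)⁻¹) * ((inner ℂ (A (T u)) u : ℂ) - inner ℂ (A (Ts u)) u) := by
            rw [hIu, map_smul, inner_smul_left, hstar2I, map_sub, inner_sub_left]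
        _ = -((2*Complex.I)⁻¹) * (z - (starRingEnd ℂ) z) := by rw [hconjz, hz]
        _ = -((2*Complex.I)⁻¹) * (((2 * z.im : ℝ) : ℂ) * Complex.I) := by
            rw [Complex.sub_conj]
        _ = (((-z.im : ℝ)) : ℂ) := by
            push_cast
            linear_combination (-(z.im) : ℂ) * h2I
    rw [hval]
    have hre : RCLike.re ((((-z.im : ℝ)) : ℂ)) = -z.im := Complex.ofReal_re _
    rw [hre, abs_neg]
    calc |z.im| = |RCLike.im z| := rfl
      _ ≤ ‖z‖ := RCLike.abs_im_le_norm z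
      _ ≤ w * ‖P u‖^2 := wT u
  have hrw : r ≤ w := aux_wbound A P hP hPP Rr hR w w0 hqR
  have hsw : s ≤ w := aux_wbound A P hP hPP Ii hI w w0 hqI
  have hcrs : cc ≤ r * s := by
    apply aux_opnA_le A P hP hPP (Rr ∘L Ii) (r*s) (mul_nonneg r0 s0)
    intro x hx
    rw [ContinuousLinearMap.comp_apply]
    calc ‖P (Rr (Ii x))‖ ≤ r * ‖P (Ii x)‖ := mulR _
      _ ≤ r * (s * ‖P x‖) := mul_le_mul_of_nonneg_left (mulI x) r0
      _ = r * s := by rw [hx, mul_one]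
  set E := Real.sqrt ((r^2 - s^2)^2 + 4*cc^2) with hE
  have E0 : 0 ≤ E := Real.sqrt_nonneg _
  set lam := (r^2 + s^2 + E)/2 with hlam
  have lam0 : 0 ≤ lam := by
    rw [hlam]
    have := sq_nonneg r
    have := sq_nonneg s
    linarith
  -- quadratic form of Q
  have hQform : ∀ u : H, RCLike.re (inner ℂ (A (Q u)) u : ℂ)
      = ‖P (Rr u)‖^2 + ‖P (Ii u)‖^2 := by
    intro u
    have hQu : Q u = Rr (Rr u) + Ii (Ii u) := rfl
    have e1 : (inner ℂ (A (Rr (Rr u))) u : ℂ) = inner ℂ (A (Rr u)) (Rr u) := by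
      have hA1 : A (Rr (Rr u)) = (ContinuousLinearMap.adjoint Rr) (A (Rr u)) := by
        have := congrArg (fun Z : H →L[ℂ] H => Z (Rr u)) hR
        simpa using this
      rw [hA1, ContinuousLinearMap.adjoint_inner_left]
    have e2 : (inner ℂ (A (Ii (Ii u))) u : ℂ) = inner ℂ (A (Ii u)) (Ii u) := by
      have hA1 : A (Ii (Ii u)) = (ContinuousLinearMap.adjoint Ii) (A (Ii u)) := by
        have := congrArg (fun Z : H →L[ℂ] H => Z (Ii u)) hI
        simpa using this
      rw [hA1, ContinuousLinearMap.adjoint_inner_left]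
    rw [hQu, map_add, inner_add_left, map_add, e1, e2]
    rw [aux_innA A P hP hPP, aux_innA A P hP hPP,
      inner_self_eq_norm_sq (𝕜 := ℂ), inner_self_eq_norm_sq (𝕜 := ℂ)]
  -- the core estimate
  have hcore : ∀ x : H, ‖P x‖ = 1 → ‖P (Rr x)‖^2 + ‖P (Ii x)‖^2 ≤ lam := by
    intro x hx
    set uu : ℕ → ℝ := fun k => ‖P (Rr ((Q^k) x))‖ with huu
    set vv : ℕ → ℝ := fun k => ‖P (Ii ((Q^k) x))‖ with hvv
    have hu0 : ∀ k, 0 ≤ uu k := fun k => norm_nonneg _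
    have hv0 : ∀ k, 0 ≤ vv k := fun k => norm_nonneg _
    set q : ℝ := ‖P (Rr x)‖^2 + ‖P (Ii x)‖^2 with hqdef
    have q0 : 0 ≤ q := by positivity
    have hq00 : uu 0 ^2 + vv 0 ^2 = q := by
      simp only [huu, hvv, hqdef, pow_zero, ContinuousLinearMap.one_apply]
    have hQk1 : ∀ k : ℕ, (Q^(k+1) : H →L[ℂ] H) x = Rr (Rr ((Q^k) x)) + Ii (Ii ((Q^k) x)) := by
      intro k
      have h : (Q^(k+1) : H →L[ℂ] H) = Q ∘L (Q^k : H →L[ℂ] H) := by rw [pow_succ']; rfl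
      rw [h]
      rfl
    have hrecu : ∀ k, uu (k+1) ≤ r^2 * uu k + cc * vv k := by
      intro k
      have h : uu (k+1) = ‖P (Rr (Rr (Rr ((Q^k) x))) + Rr (Ii (Ii ((Q^k) x))))‖ := by
        simp only [huu, hQk1 k, map_add]
      rw [h, map_add]
      calc ‖P (Rr (Rr (Rr ((Q^k) x)))) + P (Rr (Ii (Ii ((Q^k) x))))‖
          ≤ ‖P (Rr (Rr (Rr ((Q^k) x))))‖ + ‖P (Rr (Ii (Ii ((Q^k) x))))‖ := norm_add_le _ _
        _ ≤ r * ‖P (Rr (Rr ((Q^k) x)))‖ + cc * ‖P (Ii ((Q^k) x))‖ := by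
            apply add_le_add (mulR _) (mulRI (Ii ((Q^k) x)))
        _ ≤ r * (r * ‖P (Rr ((Q^k) x))‖) + cc * ‖P (Ii ((Q^k) x))‖ := by
            apply add_le_add_left (mul_le_mul_of_nonneg_left (mulR _) r0)
        _ = r^2 * uu k + cc * vv k := by simp only [huu, hvv]; ring
    have hrecv : ∀ k, vv (k+1) ≤ cc * uu k + s^2 * vv k := by
      intro k
      have h : vv (k+1) = ‖P (Ii (Rr (Rr ((Q^k) x))) + Ii (Ii (Ii ((Q^k) x))))‖ := by
        simp only [hvv, hQk1 k, map_add]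
      rw [h, map_add]
      calc ‖P (Ii (Rr (Rr ((Q^k) x)))) + P (Ii (Ii (Ii ((Q^k) x))))‖
          ≤ ‖P (Ii (Rr (Rr ((Q^k) x))))‖ + ‖P (Ii (Ii (Ii ((Q^k) x))))‖ := norm_add_le _ _
        _ ≤ cc * ‖P (Rr ((Q^k) x))‖ + s * ‖P (Ii (Ii ((Q^k) x)))‖ := by
            apply add_le_add (mulIR (Rr ((Q^k) x))) (mulI _)
        _ ≤ cc * ‖P (Rr ((Q^k) x))‖ + s * (s * ‖P (Ii ((Q^k) x))‖) := by
            apply add_le_add_right (mul_le_mul_of_nonneg_left (mulI _) s0)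
        _ = cc * uu k + s^2 * vv k := by simp only [huu, hvv]; ring
    have hnorm2 : ∀ k, uu k^2 + vv k^2 ≤ lam^(2*k) * q := by
      intro k
      induction k with
      | zero => simp [hq00]
      | succ k ih =>
        have hstep : uu (k+1)^2 + vv (k+1)^2
            ≤ (r^2*uu k + cc*vv k)^2 + (cc*uu k + s^2*vv k)^2 :=
          add_le_add (pow_le_pow_left₀ (hu0 _) (hrecu k) 2)
            (pow_le_pow_left₀ (hv0 _) (hrecv k) 2)
        have hmat := aux_mat2 (r^2) (s^2) cc (uu k) (vv k)
          (sq_nonneg r) (sq_nonneg s) c0 (hu0 k) (hv0 k)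
        rw [← hE, ← hlam] at hmat
        calc uu (k+1)^2 + vv (k+1)^2 ≤ lam^2 * (uu k^2 + vv k^2) := hstep.trans hmat
          _ ≤ lam^2 * (lam^(2*k) * q) := by
              apply mul_le_mul_of_nonneg_left ih (by positivity)
          _ = lam^(2*(k+1)) * q := by ring
    set qn : ℕ → ℝ := fun k => RCLike.re (inner ℂ (A ((Q^k) x)) x : ℂ) with hqn
    have hqn1 : qn 1 = q := by
      have e : ((Q^1 : H →L[ℂ] H)) x = Q x := by rw [pow_one]
      simp only [hqn, e, hQform x, hqdef]
    have hqabs : ∀ m, |qn m| ≤ ‖P ((Q^m) x)‖ := by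
      intro m
      simp only [hqn]
      rw [aux_innA A P hP hPP]
      calc |RCLike.re (inner ℂ (P ((Q^m) x)) (P x) : ℂ)|
          ≤ ‖(inner ℂ (P ((Q^m) x)) (P x) : ℂ)‖ := RCLike.abs_re_le_norm _
        _ ≤ ‖P ((Q^m) x)‖ * ‖P x‖ := norm_inner_le_norm _ _
        _ = ‖P ((Q^m) x)‖ := by rw [hx, mul_one]
    have hqd : ∀ m, qn m^2 ≤ qn (2*m) := by
      intro m
      have h1 : qn (2*m) = ‖P ((Q^m) x)‖^2 := by
        simp only [hqn]
        rw [← aux_pow_split A Q hQ m x]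
        rw [aux_innA A P hP hPP, inner_self_eq_norm_sq (𝕜 := ℂ)]
      calc qn m^2 = |qn m|^2 := (sq_abs _).symm
        _ ≤ ‖P ((Q^m) x)‖^2 := pow_le_pow_left₀ (abs_nonneg _) (hqabs m) 2
        _ = qn (2*m) := h1.symm
    have hq2n : ∀ n : ℕ, q^(2^n) ≤ qn (2^n) := by
      intro n
      induction n with
      | zero =>
        simpa [hqn1] using le_refl q
      | succ n ih =>
        have e1 : (2:ℕ)^(n+1) = 2*(2^n) := by ring
        calc q^(2^(n+1)) = (q^(2^n))^2 := by rw [e1, pow_mul']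
          _ ≤ (qn (2^n))^2 := pow_le_pow_left₀ (by positivity) ih 2
          _ ≤ qn (2*2^n) := hqd _
          _ = qn (2^(n+1)) := by rw [e1]
    have hqnb : ∀ n : ℕ, qn (2^n) ≤ r * uu (2^n - 1) + s * vv (2^n - 1) := by
      intro n
      have h2n : 1 ≤ 2^n := Nat.one_le_two_pow
      obtain ⟨k, hk⟩ : ∃ k, 2^n = k + 1 := ⟨2^n - 1, by omega⟩
      rw [hk, Nat.add_sub_cancel]
      calc qn (k+1) ≤ |qn (k+1)| := le_abs_self _
        _ ≤ ‖P ((Q^(k+1)) x)‖ := hqabs (k+1)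
        _ = ‖P (Rr (Rr ((Q^k) x))) + P (Ii (Ii ((Q^k) x)))‖ := by rw [hQk1 k, map_add]
        _ ≤ ‖P (Rr (Rr ((Q^k) x)))‖ + ‖P (Ii (Ii ((Q^k) x)))‖ := norm_add_le _ _
        _ ≤ r * uu k + s * vv k := by
            apply add_le_add (mulR _) (mulI _)
    have hfinal : ∀ n : ℕ, q^(2^n) ≤ (Real.sqrt (r^2+s^2) * Real.sqrt q) * lam^(2^n - 1) := by
      intro n
      calc q^(2^n) ≤ qn (2^n) := hq2n n
        _ ≤ r * uu (2^n - 1) + s * vv (2^n - 1) := hqnb n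
        _ ≤ Real.sqrt (r^2+s^2) * Real.sqrt (uu (2^n-1)^2 + vv (2^n-1)^2) :=
            aux_cauchy2 r s (uu _) (vv _) r0 s0 (hu0 _) (hv0 _)
        _ ≤ Real.sqrt (r^2+s^2) * Real.sqrt (lam^(2*(2^n-1)) * q) := by
            apply mul_le_mul_of_nonneg_left (Real.sqrt_le_sqrt (hnorm2 _)) (Real.sqrt_nonneg _)
        _ = (Real.sqrt (r^2+s^2) * Real.sqrt q) * lam^(2^n - 1) := by
            rw [Real.sqrt_mul (by positivity)]
            have hsq : Real.sqrt (lam^(2*(2^n-1))) = lam^(2^n-1) := by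
              rw [pow_mul']
              exact Real.sqrt_sq (pow_nonneg lam0 _)
            rw [hsq]
            ring
    have := aux_pow_le q lam (Real.sqrt (r^2+s^2) * Real.sqrt q) q0 lam0
      (by positivity) hfinal
    rw [hqdef] at this
    exact this
  -- from the core estimate to the weighted bound
  have hQw : ∀ u : H, |RCLike.re (inner ℂ (A (Q u)) u : ℂ)| ≤ lam * ‖P u‖^2 := by
    intro u
    rw [hQform u, abs_of_nonneg (by positivity)]
    rcases eq_or_ne (‖P u‖) 0 with h0 | h0
    · have ha := mulR u
      have hb := mulI u
      rw [h0, mul_zero] at ha hb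
      have ha' : ‖P (Rr u)‖ = 0 := le_antisymm ha (norm_nonneg _)
      have hb' : ‖P (Ii u)‖ = 0 := le_antisymm hb (norm_nonneg _)
      rw [ha', hb', h0]
      norm_num
    · have ht : 0 < ‖P u‖ := lt_of_le_of_ne (norm_nonneg _) (Ne.symm h0)
      set t := ‖P u‖ with htd
      have hx1 : ‖P (t⁻¹ • u)‖ = 1 := by
        rw [map_smul_of_tower, norm_smul, Real.norm_eq_abs, abs_of_pos (inv_pos.mpr ht),
          ← htd]
        exact inv_mul_cancel₀ h0
      have hc := hcore (t⁻¹ • u) hx1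
      have e1 : ‖P (Rr (t⁻¹ • u))‖ = t⁻¹ * ‖P (Rr u)‖ := by
        rw [map_smul_of_tower, map_smul_of_tower, norm_smul, Real.norm_eq_abs,
          abs_of_pos (inv_pos.mpr ht)]
      have e2 : ‖P (Ii (t⁻¹ • u))‖ = t⁻¹ * ‖P (Ii u)‖ := by
        rw [map_smul_of_tower, map_smul_of_tower, norm_smul, Real.norm_eq_abs,
          abs_of_pos (inv_pos.mpr ht)]
      rw [e1, e2] at hc
      have hinv : t⁻¹ * t = 1 := inv_mul_cancel₀ h0
      have hexp : (t⁻¹ * ‖P (Rr u)‖)^2 + (t⁻¹ * ‖P (Ii u)‖)^2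
          = (‖P (Rr u)‖^2 + ‖P (Ii u)‖^2) * (t⁻¹ * t⁻¹) := by ring
      rw [hexp] at hc
      have := mul_le_mul_of_nonneg_right hc (le_of_lt (mul_pos ht ht))
      calc ‖P (Rr u)‖^2 + ‖P (Ii u)‖^2
          = (‖P (Rr u)‖^2 + ‖P (Ii u)‖^2) * (t⁻¹*t) * (t⁻¹*t) := by rw [hinv]; ring
        _ = (‖P (Rr u)‖^2 + ‖P (Ii u)‖^2) * (t⁻¹ * t⁻¹) * (t*t) := by ring
        _ ≤ lam * (t*t) := this
        _ = lam * t^2 := by ring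
  have hQle : opnA A Q ≤ lam := aux_wbound A P hP hPP Q hQ lam lam0 hQw
  -- bound for the anticommutator
  have cQ : ∀ y, ‖P (Q y)‖ ≤ (‖Rr‖^2 + ‖Ii‖^2) * ‖P y‖ := by
    intro y
    have hQy : Q y = Rr (Rr y) + Ii (Ii y) := rfl
    rw [hQy, map_add]
    calc ‖P (Rr (Rr y)) + P (Ii (Ii y))‖
        ≤ ‖P (Rr (Rr y))‖ + ‖P (Ii (Ii y))‖ := norm_add_le _ _
      _ ≤ ‖Rr‖ * (‖Rr‖ * ‖P y‖) + ‖Ii‖ * (‖Ii‖ * ‖P y‖) := by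
          apply add_le_add
          · exact (cR _).trans (mul_le_mul_of_nonneg_left (cR _) (norm_nonneg _))
          · exact (cI _).trans (mul_le_mul_of_nonneg_left (cI _) (norm_nonneg _))
      _ = (‖Rr‖^2 + ‖Ii‖^2) * ‖P y‖ := by ring
  have hMle : opnA A (Ts ∘L T + T ∘L Ts) ≤ 2 * opnA A Q := by
    rw [hM]
    apply aux_opnA_le A P hP hPP _ _
      (by have := aux_opnA_nonneg A Q; linarith)
    intro x hx
    have e : (((2:ℂ) • Q) x) = (2:ℂ) • (Q x) := rfl
    rw [e, map_smul, norm_smul]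
    have e2 : ‖(2:ℂ)‖ = 2 := by norm_num
    rw [e2]
    have hb := aux_le_opnA A P hP hPP Q (‖Rr‖^2 + ‖Ii‖^2) cQ x hx
    linarith
  have hEle : E ≤ r^2 + s^2 := by
    rw [hE]
    have h1 : (r^2 - s^2)^2 + 4*cc^2 ≤ (r^2+s^2)^2 := by
      nlinarith [hcrs, c0, mul_nonneg r0 s0]
    calc Real.sqrt ((r^2-s^2)^2 + 4*cc^2) ≤ Real.sqrt ((r^2+s^2)^2) := Real.sqrt_le_sqrt h1
      _ = r^2+s^2 := Real.sqrt_sq (by positivity)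
  have hr2 : r^2 ≤ w^2 := pow_le_pow_left₀ r0 hrw 2
  have hs2 : s^2 ≤ w^2 := pow_le_pow_left₀ s0 hsw 2
  constructor
  · have h : opnA A (Ts ∘L T + T ∘L Ts) ≤ 2*lam := by
      calc opnA A (Ts ∘L T + T ∘L Ts) ≤ 2 * opnA A Q := hMle
        _ ≤ 2 * lam := by linarith
    rw [hlam] at h
    linarith
  · linarith
end
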